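/- arXiv:2602.14034 — 4 statements merged into one kernel-verified Lean document; each statement's English description precedes it below -/
import Mathlib

section
/- Let z be a nonzero normal element of the skew polynomial ring S_P = k_P[x_1,…,x_n], and write z = z_1 + … + z_k as its decomposition into nonzero ℕ^n-homogeneous components. Then each z_j is a normal element and the automorphisms η_{z_j} all equal η_z. -/
variable {k : Type*} [Field k] {n : ℕ}

/-- The defining relations `x_j x_i = p_{ij} x_i x_j` of the skew polynomial ring. -/
def skewRel (p : Fin n → Fin n → k) :
    FreeAlgebra k (Fin n) → FreeAlgebra k (Fin n) → Prop := fun u v =>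
  ∃ i j : Fin n, u = FreeAlgebra.ι k j * FreeAlgebra.ι k i ∧
    v = p i j • (FreeAlgebra.ι k i * FreeAlgebra.ι k j)

/-- The skew polynomial ring `S_P = k_P[x_1, …, x_n]`. -/
abbrev SkewPoly (p : Fin n → Fin n → k) := RingQuot (skewRel p)

/-- The generator `x_i` of the skew polynomial ring. -/
def skewX (p : Fin n → Fin n → k) (i : Fin n) : SkewPoly p :=
  RingQuot.mkRingHom (skewRel p) (FreeAlgebra.ι k i)

/-- The ordered monomial `x_1^{a_1} ⋯ x_n^{a_n}`. -/
def skewMonomial (p : Fin n → Fin n → k) (a : Fin n → ℕ) : SkewPoly p :=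
  (List.ofFn fun i => skewX p i ^ a i).prod

section Twist

variable (p : Fin n → Fin n → k)

/-- The twisting bicharacter `σ(a,b) = ∏_{m<l} p_{ml}^{a_l b_m}`. -/
def sg (a b : Fin n → ℕ) : k :=
  ∏ l : Fin n, ∏ m : Fin n, if m < l then p m l ^ (a l * b m) else 1

lemma sg_zero_left (b : Fin n → ℕ) : sg p 0 b = 1 := by
  simp [sg]

lemma sg_zero_right (a : Fin n → ℕ) : sg p a 0 = 1 := by
  simp [sg]

lemma sg_add_left (a a' b : Fin n → ℕ) : sg p (a + a') b = sg p a b * sg p a' b := by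
  rw [sg, sg, sg, ← Finset.prod_mul_distrib]
  refine Finset.prod_congr rfl fun l _ => ?_
  rw [← Finset.prod_mul_distrib]
  refine Finset.prod_congr rfl fun m _ => ?_
  by_cases h : m < l <;> simp [h, Pi.add_apply, add_mul, pow_add]

lemma sg_add_right (a b b' : Fin n → ℕ) : sg p a (b + b') = sg p a b * sg p a b' := by
  rw [sg, sg, sg, ← Finset.prod_mul_distrib]
  refine Finset.prod_congr rfl fun l _ => ?_
  rw [← Finset.prod_mul_distrib]
  refine Finset.prod_congr rfl fun m _ => ?_
  by_cases h : m < l <;> simp [h, Pi.add_apply, mul_add, pow_add]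

lemma sg_assoc (a b c : Fin n → ℕ) :
    sg p a b * sg p (a + b) c = sg p b c * sg p a (b + c) := by
  rw [sg_add_left, sg_add_right]; ring

lemma sg_ne_zero (hp : ∀ i j, p i j * p j i = 1) (a b : Fin n → ℕ) : sg p a b ≠ 0 := by
  rw [sg]
  refine Finset.prod_ne_zero_iff.2 fun l _ => Finset.prod_ne_zero_iff.2 fun m _ => ?_
  by_cases h : m < l
  · simp only [h, if_true]
    exact pow_ne_zero _ (left_ne_zero_of_mul_eq_one (hp m l))
  · simp [h]

lemma sg_single_right (a : Fin n → ℕ) (i : Fin n) :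
    sg p a (Pi.single i 1) = ∏ l : Fin n, if i < l then p i l ^ a l else 1 := by
  refine Finset.prod_congr rfl fun l _ => ?_
  rw [Fintype.prod_eq_single i ?h]
  · simp
  · intro m hm
    rw [Pi.single_eq_of_ne hm]
    simp

lemma sg_single_left (b : Fin n → ℕ) (i : Fin n) :
    sg p (Pi.single i 1) b = ∏ m : Fin n, if m < i then p m i ^ b m else 1 := by
  rw [sg, Fintype.prod_eq_single i ?h]
  · refine Finset.prod_congr rfl fun m _ => ?_
    simp
  · intro l hl
    refine Finset.prod_eq_one fun m _ => ?_
    rw [Pi.single_eq_of_ne hl]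
    simp

lemma sg_single_single (hp : ∀ i j, p i j * p j i = 1) (hpdiag : ∀ i, p i i = 1) (i j : Fin n) :
    sg p (Pi.single j 1) (Pi.single i 1) = p i j * sg p (Pi.single i 1) (Pi.single j 1) := by
  rw [sg_single_right, sg_single_right]
  rw [Fintype.prod_eq_single j (fun l hl => by rw [Pi.single_eq_of_ne hl]; simp),
    Fintype.prod_eq_single i (fun l hl => by rw [Pi.single_eq_of_ne hl]; simp)]
  rw [Pi.single_eq_same, Pi.single_eq_same, pow_one, pow_one]
  rcases lt_trichotomy i j with h | h | h
  · rw [if_pos h, if_neg (not_lt_of_gt h), mul_one]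
  · subst h; rw [hpdiag i, one_mul]
  · rw [if_neg (not_lt_of_gt h), if_pos h, ← hp i j]

end Twist

section TMul

variable (p : Fin n → Fin n → k)

/-- The twisted convolution product, as a bilinear map on `(Fin n → ℕ) →₀ k`. -/
noncomputable def tmul :
    ((Fin n → ℕ) →₀ k) →ₗ[k] ((Fin n → ℕ) →₀ k) →ₗ[k] ((Fin n → ℕ) →₀ k) :=
  Finsupp.lsum k fun a =>
    LinearMap.toSpanSingleton k _
      (Finsupp.lsum k fun b =>
        LinearMap.toSpanSingleton k _ (Finsupp.single (a + b) (sg p a b)))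

lemma tmul_single_single (a b : Fin n → ℕ) (ca cb : k) :
    tmul p (Finsupp.single a ca) (Finsupp.single b cb) =
      Finsupp.single (a + b) (ca * cb * sg p a b) := by
  simp only [tmul, Finsupp.lsum_single, LinearMap.smul_apply, LinearMap.toSpanSingleton_apply,
    Finsupp.smul_single, smul_eq_mul]
  congr 1; ring

lemma tmul_assoc (x y z : (Fin n → ℕ) →₀ k) :
    tmul p (tmul p x y) z = tmul p x (tmul p y z) := by
  induction x using Finsupp.induction_linear with
  | zero => simp
  | add f g hf hg => simp [map_add, LinearMap.add_apply, hf, hg]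
  | single a ca =>
    induction y using Finsupp.induction_linear with
    | zero => simp
    | add f g hf hg => simp [map_add, LinearMap.add_apply, hf, hg]
    | single b cb =>
      induction z using Finsupp.induction_linear with
      | zero => simp
      | add f g hf hg => simp [map_add, hf, hg]
      | single c cc =>
        rw [tmul_single_single, tmul_single_single, tmul_single_single, tmul_single_single]
        rw [add_assoc]
        congr 1
        have := sg_assoc p a b c
        ring_nf
        ring_nf at this
        linear_combination (ca * cb * cc) * this

lemma tmul_one_left (v : (Fin n → ℕ) →₀ k) : tmul p (Finsupp.single 0 1) v = v := by
  induction v using Finsupp.induction_linear with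
  | zero => simp
  | add f g hf hg => simp [map_add, hf, hg]
  | single b cb => rw [tmul_single_single]; simp [sg_zero_left]

lemma tmul_one_right (v : (Fin n → ℕ) →₀ k) : tmul p v (Finsupp.single 0 1) = v := by
  induction v using Finsupp.induction_linear with
  | zero => simp
  | add f g hf hg => simp [map_add, LinearMap.add_apply, hf, hg]
  | single b cb => rw [tmul_single_single]; simp [sg_zero_right]

end TMul

section Phi

variable (p : Fin n → Fin n → k) (hp : ∀ i j, p i j * p j i = 1) (hpdiag : ∀ i, p i i = 1)

/-- The left regular representation of `S_P` on the twisted convolution algebra. -/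
noncomputable def phi : SkewPoly p →ₐ[k] Module.End k ((Fin n → ℕ) →₀ k) :=
  RingQuot.liftAlgHom k
    ⟨FreeAlgebra.lift k fun i => tmul p (Finsupp.single (Pi.single i 1) 1), by
      rintro x y ⟨i, j, rfl, rfl⟩
      rw [map_mul, map_smul, map_mul]
      simp only [FreeAlgebra.lift_ι_apply]
      refine Finsupp.lhom_ext fun b cb => ?_
      simp only [Module.End.mul_apply, LinearMap.smul_apply]
      rw [tmul_single_single, tmul_single_single, tmul_single_single, tmul_single_single,
        Finsupp.smul_single, add_left_comm, smul_eq_mul]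
      congr 1
      rw [sg_add_right, sg_add_right]
      linear_combination (cb * sg p (Pi.single i 1) b * sg p (Pi.single j 1) b) *
        sg_single_single p hp hpdiag i j⟩

lemma skewX_eq_mkAlgHom (i : Fin n) :
    skewX p i = RingQuot.mkAlgHom k (skewRel p) (FreeAlgebra.ι k i) := by
  rw [skewX, ← RingQuot.mkAlgHom_coe k]
  rfl

lemma phi_skewX (i : Fin n) :
    phi p hp hpdiag (skewX p i) = tmul p (Finsupp.single (Pi.single i 1) 1) := by
  rw [skewX_eq_mkAlgHom, phi, RingQuot.liftAlgHom_mkAlgHom_apply, FreeAlgebra.lift_ι_apply]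

lemma skew_adjoin_top : Algebra.adjoin k (Set.range (skewX p)) = ⊤ := by
  have h1 : Set.range (skewX p)
      = (RingQuot.mkAlgHom k (skewRel p)) '' Set.range (FreeAlgebra.ι k) := by
    rw [show skewX p = (RingQuot.mkAlgHom k (skewRel p)) ∘ (FreeAlgebra.ι k) from
      funext (skewX_eq_mkAlgHom p), Set.range_comp]
  rw [h1, ← AlgHom.map_adjoin, FreeAlgebra.adjoin_range_ι, Algebra.map_top,
    AlgHom.range_eq_top]
  exact RingQuot.mkAlgHom_surjective k _

/-- Evaluation of the regular representation at the identity. -/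
noncomputable def Phi (u : SkewPoly p) : (Fin n → ℕ) →₀ k :=
  phi p hp hpdiag u (Finsupp.single 0 1)

lemma phi_eq_tmul (u : SkewPoly p) (v : (Fin n → ℕ) →₀ k) :
    phi p hp hpdiag u v = tmul p (Phi p hp hpdiag u) v := by
  have hu : u ∈ Algebra.adjoin k (Set.range (skewX p)) := by
    rw [skew_adjoin_top]; trivial
  revert v
  induction hu using Algebra.adjoin_induction with
  | mem x hx =>
    obtain ⟨i, rfl⟩ := hx
    intro v
    rw [Phi, phi_skewX, tmul_one_right]
  | algebraMap r =>
    intro v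
    rw [Phi, AlgHom.commutes, Module.algebraMap_end_apply, Module.algebraMap_end_apply,
      map_smul, LinearMap.smul_apply, tmul_one_left]
  | add a b ha hb iha ihb =>
    intro v
    rw [Phi, map_add, LinearMap.add_apply, LinearMap.add_apply, map_add, LinearMap.add_apply,
      iha, ihb, Phi, Phi]
  | mul a b ha hb iha ihb =>
    intro v
    rw [Phi, map_mul, Module.End.mul_apply, Module.End.mul_apply, iha, ihb, iha, ← tmul_assoc]
    rfl

lemma Phi_mul (u v : SkewPoly p) :
    Phi p hp hpdiag (u * v) = tmul p (Phi p hp hpdiag u) (Phi p hp hpdiag v) := by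
  rw [Phi, map_mul, Module.End.mul_apply, phi_eq_tmul]
  rfl

lemma Phi_smul (r : k) (u : SkewPoly p) :
    Phi p hp hpdiag (r • u) = r • Phi p hp hpdiag u := by
  rw [Phi, map_smul, LinearMap.smul_apply, Phi]

lemma Phi_one : Phi p hp hpdiag 1 = Finsupp.single 0 1 := by
  rw [Phi, map_one, Module.End.one_apply]

end Phi

section Straighten

variable (p : Fin n → Fin n → k)

lemma skew_comm (i j : Fin n) :
    skewX p j * skewX p i = p i j • (skewX p i * skewX p j) := by
  have h := RingQuot.mkAlgHom_rel (S := k) (s := skewRel p) ⟨i, j, rfl, rfl⟩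
  rw [map_mul, map_smul, map_mul] at h
  simpa [skewX_eq_mkAlgHom] using h

/-- The generators reindexed by `ℕ`. -/
noncomputable def gq (t : ℕ) : SkewPoly p := if h : t < n then skewX p ⟨t, h⟩ else 1

/-- The matrix entries reindexed by `ℕ`. -/
noncomputable def qq (s t : ℕ) : k :=
  if hs : s < n then (if ht : t < n then p ⟨s, hs⟩ ⟨t, ht⟩ else 1) else 1

lemma gq_comm (s t : ℕ) : gq p t * gq p s = qq p s t • (gq p s * gq p t) := by
  unfold gq qq
  by_cases hs : s < n
  · by_cases ht : t < n
    · rw [dif_pos hs, dif_pos ht, dif_pos hs, dif_pos ht]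
      exact skew_comm p _ _
    · simp [hs, ht]
  · simp [hs]

lemma gq_pow_comm (s t : ℕ) (m : ℕ) :
    gq p t ^ m * gq p s = qq p s t ^ m • (gq p s * gq p t ^ m) := by
  induction m with
  | zero => simp
  | succ m ih =>
    rw [pow_succ, mul_assoc, gq_comm, mul_smul_comm, ← mul_assoc, ih,
      smul_mul_assoc, smul_smul, mul_assoc, ← pow_succ, ← pow_succ']

/-- Partial ordered monomial `∏_{t < m} g_t^{c t}`. -/
noncomputable def Pm (m : ℕ) (c : ℕ → ℕ) : SkewPoly p :=
  ((List.range m).map fun t => gq p t ^ c t).prod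

lemma Pm_zero (c : ℕ → ℕ) : Pm p 0 c = 1 := by simp [Pm]

lemma Pm_succ (m : ℕ) (c : ℕ → ℕ) : Pm p (m + 1) c = Pm p m c * gq p m ^ c m := by
  rw [Pm, List.range_succ, List.map_append, List.prod_append, Pm]
  simp

lemma Pm_congr (m : ℕ) (c c' : ℕ → ℕ) (h : ∀ t < m, c t = c' t) : Pm p m c = Pm p m c' := by
  induction m with
  | zero => rw [Pm_zero, Pm_zero]
  | succ m ih =>
    rw [Pm_succ, Pm_succ, ih fun t ht => h t (ht.trans (Nat.lt_succ_self m)),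
      h m (Nat.lt_succ_self m)]

lemma Pm_mul_gq (s : ℕ) (m : ℕ) (hsm : s < m) (c : ℕ → ℕ) :
    Pm p m c * gq p s =
      (∏ l ∈ Finset.range m, if s < l then qq p s l ^ c l else 1) •
        Pm p m (fun t => c t + if t = s then 1 else 0) := by
  induction m, Nat.succ_le_of_lt hsm using Nat.le_induction with
  | base =>
    rw [Pm_succ, mul_assoc, ← pow_succ, Finset.prod_eq_one fun l hl => if_neg (by
      simp only [Finset.mem_range] at hl; omega), one_smul, Pm_succ,
      Pm_congr p s _ (fun t => c t + if t = s then 1 else 0) (fun t ht => by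
        have : t ≠ s := by omega
        simp [this]), if_pos rfl]
  | succ m hm ih =>
    have hsm' : s < m := by omega
    rw [Pm_succ, mul_assoc, gq_pow_comm, mul_smul_comm, ← mul_assoc, ih hsm',
      smul_mul_assoc, smul_smul, Finset.prod_range_succ, if_pos hsm',
      mul_comm ((∏ l ∈ Finset.range m, if s < l then qq p s l ^ c l else 1)),
      Pm_succ, if_neg (by omega : ¬ m = s), Nat.add_zero]

lemma skewMonomial_eq_Pm (a : Fin n → ℕ) :
    skewMonomial p a = Pm p n (fun t => if h : t < n then a ⟨t, h⟩ else 0) := by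
  rw [skewMonomial, List.ofFn_eq_map, Pm, ← (show (List.finRange n).map Fin.val = List.range n from
    List.ext_getElem (by simp) (fun i _ _ => by simp)), List.map_map]
  congr 1
  refine List.map_congr_left fun i _ => ?_
  simp only [Function.comp_apply, gq, dif_pos i.isLt, Fin.eta]

lemma skewMonomial_mul_X (a : Fin n → ℕ) (i : Fin n) :
    skewMonomial p a * skewX p i =
      sg p a (Pi.single i 1) • skewMonomial p (a + Pi.single i 1) := by
  have hgx : gq p i.val = skewX p i := by rw [gq, dif_pos i.isLt, Fin.eta]
  rw [skewMonomial_eq_Pm, ← hgx, Pm_mul_gq p i.val n i.isLt]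
  congr 1
  · rw [sg_single_right, ← Fin.prod_univ_eq_prod_range
      (fun l => if i.val < l then qq p i.val l ^ (if h : l < n then a ⟨l, h⟩ else 0) else 1) n]
    refine Finset.prod_congr rfl fun l _ => ?_
    by_cases h : i < l
    · rw [if_pos (show (i : ℕ) < (l : ℕ) from h), qq, dif_pos i.isLt, dif_pos l.isLt,
        dif_pos l.isLt, Fin.eta, Fin.eta, if_pos h]
    · rw [if_neg (show ¬ (i : ℕ) < (l : ℕ) from h), if_neg h]
  · rw [skewMonomial_eq_Pm]
    refine Pm_congr p n _ _ fun t ht => ?_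
    rw [dif_pos ht, dif_pos ht, Pi.add_apply, Pi.single_apply]
    congr 1
    simp [Fin.ext_iff]

lemma skewMonomial_zero : skewMonomial p 0 = 1 := by
  rw [skewMonomial]
  refine List.prod_eq_one fun x hx => ?_
  rw [List.mem_ofFn] at hx
  obtain ⟨i, rfl⟩ := hx
  simp

lemma skewMonomial_single (i : Fin n) : skewMonomial p (Pi.single i 1) = skewX p i := by
  have h := skewMonomial_mul_X p 0 i
  rw [skewMonomial_zero, one_mul, sg_zero_left, one_smul, zero_add] at h
  exact h.symm

lemma skewMonomial_mul (b a : Fin n → ℕ) :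
    skewMonomial p a * skewMonomial p b = sg p a b • skewMonomial p (a + b) := by
  generalize hN : (∑ l, b l) = N
  induction N using Nat.strong_induction_on generalizing a b with
  | _ N ihN =>
  by_cases hb : b = 0
  · subst hb
    rw [skewMonomial_zero, mul_one, sg_zero_right, one_smul, add_zero]
  · have hs : (Finset.univ.filter fun l => b l ≠ 0).Nonempty := by
      obtain ⟨l, hl⟩ := Function.ne_iff.1 hb
      exact ⟨l, Finset.mem_filter.2 ⟨Finset.mem_univ l, hl⟩⟩
    set i := (Finset.univ.filter fun l => b l ≠ 0).max' hs with hi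
    have hbi : b i ≠ 0 := (Finset.mem_filter.1 ((Finset.univ.filter fun l => b l ≠ 0).max'_mem hs)).2
    have hmax : ∀ l, b l ≠ 0 → l ≤ i := fun l hl =>
      Finset.le_max' _ l (Finset.mem_filter.2 ⟨Finset.mem_univ l, hl⟩)
    set b' := b - Pi.single i 1 with hb'
    have hbb : b = b' + Pi.single i 1 := by
      funext l
      by_cases hl : l = i
      · subst hl
        simp only [Pi.add_apply, Pi.sub_apply, Pi.single_eq_same, hb']
        omega
      · simp only [Pi.add_apply, Pi.sub_apply, Pi.single_eq_of_ne hl, hb']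
        omega
    have hb'top : ∀ l, i < l → b' l = 0 := by
      intro l hl
      have h1 : b l = 0 := by
        by_contra h2
        exact absurd (hmax l h2) (not_le_of_gt hl)
      simp only [hb', Pi.sub_apply, h1, Nat.zero_sub]
    have hsg1 : sg p b' (Pi.single i 1) = 1 := by
      rw [sg_single_right]
      refine Finset.prod_eq_one fun l _ => ?_
      by_cases hl : i < l
      · rw [if_pos hl, hb'top l hl, pow_zero]
      · rw [if_neg hl]
    have key1 : skewMonomial p b' * skewX p i = skewMonomial p b := by
      rw [skewMonomial_mul_X, hsg1, one_smul, ← hbb]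
    have hsum : ∑ l, b' l < N := by
      have h2 : ∑ l, b l = (∑ l, b' l) + 1 := by
        simp only [hbb, Pi.add_apply, Finset.sum_add_distrib]
        congr 1
        simp [Pi.single_apply]
      omega
    rw [← key1, ← mul_assoc, ihN _ hsum b' a rfl, smul_mul_assoc, skewMonomial_mul_X,
      smul_smul, hbb, ← add_assoc]
    congr 1
    rw [sg_add_right, sg_add_left, hsg1, mul_one]

end Straighten

section Inj

variable (p : Fin n → Fin n → k) (hp : ∀ i j, p i j * p j i = 1) (hpdiag : ∀ i, p i i = 1)

lemma exists_split (a : Fin n → ℕ) (ha : a ≠ 0) :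
    ∃ (i : Fin n) (a' : Fin n → ℕ), a = a' + Pi.single i 1 ∧
      sg p a' (Pi.single i 1) = 1 ∧ (∑ l, a' l) + 1 = ∑ l, a l ∧
      skewMonomial p a' * skewX p i = skewMonomial p a := by
  have hs : (Finset.univ.filter fun l => a l ≠ 0).Nonempty := by
    obtain ⟨l, hl⟩ := Function.ne_iff.1 ha
    exact ⟨l, Finset.mem_filter.2 ⟨Finset.mem_univ l, hl⟩⟩
  set i := (Finset.univ.filter fun l => a l ≠ 0).max' hs with hi
  have hbi : a i ≠ 0 := (Finset.mem_filter.1 ((Finset.univ.filter fun l => a l ≠ 0).max'_mem hs)).2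
  have hmax : ∀ l, a l ≠ 0 → l ≤ i := fun l hl =>
    Finset.le_max' _ l (Finset.mem_filter.2 ⟨Finset.mem_univ l, hl⟩)
  set a' := a - Pi.single i 1 with ha'
  have hbb : a = a' + Pi.single i 1 := by
    funext l
    by_cases hl : l = i
    · subst hl
      simp only [Pi.add_apply, Pi.sub_apply, Pi.single_eq_same, ha']
      omega
    · simp only [Pi.add_apply, Pi.sub_apply, Pi.single_eq_of_ne hl, ha']
      omega
  have ha'top : ∀ l, i < l → a' l = 0 := by
    intro l hl
    have h1 : a l = 0 := by
      by_contra h2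
      exact absurd (hmax l h2) (not_le_of_gt hl)
    simp only [ha', Pi.sub_apply, h1, Nat.zero_sub]
  have hsg1 : sg p a' (Pi.single i 1) = 1 := by
    rw [sg_single_right]
    refine Finset.prod_eq_one fun l _ => ?_
    by_cases hl : i < l
    · rw [if_pos hl, ha'top l hl, pow_zero]
    · rw [if_neg hl]
  refine ⟨i, a', hbb, hsg1, ?_, ?_⟩
  · have h2 : ∑ l, a l = (∑ l, a' l) + 1 := by
      simp only [hbb, Pi.add_apply, Finset.sum_add_distrib]
      congr 1
      simp [Pi.single_apply]
    omega
  · rw [skewMonomial_mul_X, hsg1, one_smul, ← hbb]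

lemma Phi_zero : Phi p hp hpdiag 0 = 0 := by rw [Phi, map_zero, LinearMap.zero_apply]

lemma Phi_add (u v : SkewPoly p) :
    Phi p hp hpdiag (u + v) = Phi p hp hpdiag u + Phi p hp hpdiag v := by
  rw [Phi, map_add, LinearMap.add_apply, Phi, Phi]

lemma Phi_skewX (i : Fin n) :
    Phi p hp hpdiag (skewX p i) = Finsupp.single (Pi.single i 1) 1 := by
  rw [Phi, phi_skewX, tmul_single_single]
  simp [sg_zero_right]

lemma Phi_monomial (a : Fin n → ℕ) :
    Phi p hp hpdiag (skewMonomial p a) = Finsupp.single a 1 := by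
  generalize hN : (∑ l, a l) = N
  induction N using Nat.strong_induction_on generalizing a with
  | _ N ihN =>
  by_cases ha : a = 0
  · subst ha
    rw [skewMonomial_zero, Phi_one]
  · obtain ⟨i, a', hbb, hsg1, hsum, hkey⟩ := exists_split p a ha
    rw [← hkey, Phi_mul, Phi_skewX, ihN (∑ l, a' l) (by omega) a' rfl, tmul_single_single,
      hsg1, one_mul, mul_one, ← hbb]

/-- The linear section sending `δ_a` to the ordered monomial `x^a`. -/
noncomputable def psi : ((Fin n → ℕ) →₀ k) →ₗ[k] SkewPoly p :=
  Finsupp.lsum k fun a => LinearMap.toSpanSingleton k _ (skewMonomial p a)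

lemma psi_single (a : Fin n → ℕ) (r : k) :
    psi p (Finsupp.single a r) = r • skewMonomial p a := by
  simp [psi, Finsupp.lsum_single]

lemma mem_span_monomial (u : SkewPoly p) :
    u ∈ Submodule.span k (Set.range (skewMonomial p)) := by
  have hu : u ∈ Algebra.adjoin k (Set.range (skewX p)) := by
    rw [skew_adjoin_top]; trivial
  induction hu using Algebra.adjoin_induction with
  | mem x hx =>
    obtain ⟨i, rfl⟩ := hx
    exact Submodule.subset_span ⟨Pi.single i 1, skewMonomial_single p i⟩
  | algebraMap r =>
    rw [Algebra.algebraMap_eq_smul_one]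
    exact Submodule.smul_mem _ _ (Submodule.subset_span ⟨0, skewMonomial_zero p⟩)
  | add a b ha hb iha ihb => exact Submodule.add_mem _ iha ihb
  | mul a b ha hb iha ihb =>
    clear ha hb
    induction iha using Submodule.span_induction with
    | mem x hx =>
      induction ihb using Submodule.span_induction with
      | mem y hy =>
        obtain ⟨a1, rfl⟩ := hx
        obtain ⟨b1, rfl⟩ := hy
        rw [skewMonomial_mul]
        exact Submodule.smul_mem _ _ (Submodule.subset_span ⟨a1 + b1, rfl⟩)
      | zero => rw [mul_zero]; exact Submodule.zero_mem _
      | add y1 y2 hy1 hy2 ih1 ih2 => rw [mul_add]; exact Submodule.add_mem _ ih1 ih2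
      | smul r y hy ih => rw [mul_smul_comm]; exact Submodule.smul_mem _ _ ih
    | zero => rw [zero_mul]; exact Submodule.zero_mem _
    | add x1 x2 hx1 hx2 ih1 ih2 => rw [add_mul]; exact Submodule.add_mem _ ih1 ih2
    | smul r x hx ih => rw [smul_mul_assoc]; exact Submodule.smul_mem _ _ ih

lemma psi_Phi (u : SkewPoly p) : psi p (Phi p hp hpdiag u) = u := by
  have hu := mem_span_monomial p u
  induction hu using Submodule.span_induction with
  | mem x hx =>
    obtain ⟨a, rfl⟩ := hx
    rw [Phi_monomial, psi_single, one_smul]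
  | zero => rw [Phi_zero, map_zero]
  | add x y hx hy ihx ihy => rw [Phi_add, map_add, ihx, ihy]
  | smul r x hx ih => rw [Phi_smul, map_smul, ih]

lemma Phi_injective : Function.Injective (Phi p hp hpdiag) := by
  intro u v h
  rw [← psi_Phi p hp hpdiag u, h, psi_Phi]

end Inj

section Order

instance : WellFoundedLT (Fin n) := Finite.to_wellFoundedLT

variable (p : Fin n → Fin n → k)

lemma lex_add_lt_right {a a' : Fin n → ℕ} (b : Fin n → ℕ) (h : toLex a < toLex a') :
    toLex (a + b) < toLex (a' + b) := by
  obtain ⟨i, hj, hi⟩ := h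
  refine ⟨i, fun j hji => ?_, ?_⟩
  · show a j + b j = a' j + b j
    rw [show a j = a' j from hj j hji]
  · show a i + b i < a' i + b i
    exact Nat.add_lt_add_right hi (b i)

lemma lex_add_lt_left {b b' : Fin n → ℕ} (a : Fin n → ℕ) (h : toLex b < toLex b') :
    toLex (a + b) < toLex (a + b') := by
  obtain ⟨i, hj, hi⟩ := h
  refine ⟨i, fun j hji => ?_, ?_⟩
  · show a j + b j = a j + b' j
    rw [show b j = b' j from hj j hji]
  · show a i + b i < a i + b' i
    exact Nat.add_lt_add_left hi (a i)

lemma lex_add_le_left {b b' : Fin n → ℕ} (a : Fin n → ℕ) (h : toLex b ≤ toLex b') :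
    toLex (a + b) ≤ toLex (a + b') := by
  rcases eq_or_lt_of_le h with h1 | h1
  · rw [toLex.injective h1]
  · exact le_of_lt (lex_add_lt_left a h1)

lemma lex_add_le_right {a a' : Fin n → ℕ} (b : Fin n → ℕ) (h : toLex a ≤ toLex a') :
    toLex (a + b) ≤ toLex (a' + b) := by
  rcases eq_or_lt_of_le h with h1 | h1
  · rw [toLex.injective h1]
  · exact le_of_lt (lex_add_lt_right b h1)

lemma lex_max_unique {a b ma mb : Fin n → ℕ} (ha : toLex a ≤ toLex ma)
    (hb : toLex b ≤ toLex mb) (h : a + b = ma + mb) : a = ma ∧ b = mb := by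
  rcases eq_or_lt_of_le ha with h1 | h1
  · have ha' : a = ma := toLex.injective h1
    subst ha'
    exact ⟨rfl, add_left_cancel h⟩
  · exfalso
    have h2 : toLex (a + b) < toLex (ma + mb) :=
      lt_of_lt_of_le (lex_add_lt_right b h1) (lex_add_le_left ma hb)
    rw [h] at h2
    exact lt_irrefl _ h2

lemma lex_min_unique {a b ma mb : Fin n → ℕ} (ha : toLex ma ≤ toLex a)
    (hb : toLex mb ≤ toLex b) (h : a + b = ma + mb) : a = ma ∧ b = mb := by
  rcases eq_or_lt_of_le ha with h1 | h1
  · have ha' : ma = a := toLex.injective h1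
    subst ha'
    exact ⟨rfl, add_left_cancel h⟩
  · exfalso
    have h2 : toLex (ma + mb) < toLex (a + b) :=
      lt_of_lt_of_le (lex_add_lt_right mb h1) (lex_add_le_left a hb)
    rw [h] at h2
    exact lt_irrefl _ h2

/-- The lexicographically largest element of the support. -/
noncomputable def lmax (f : (Fin n → ℕ) →₀ k) (hf : f ≠ 0) : Fin n → ℕ :=
  ofLex ((f.support.image (toLex : (Fin n → ℕ) → Lex (Fin n → ℕ))).max'
    ((Finsupp.support_nonempty_iff.2 hf).image toLex))

/-- The lexicographically smallest element of the support. -/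
noncomputable def lmin (f : (Fin n → ℕ) →₀ k) (hf : f ≠ 0) : Fin n → ℕ :=
  ofLex ((f.support.image (toLex : (Fin n → ℕ) → Lex (Fin n → ℕ))).min'
    ((Finsupp.support_nonempty_iff.2 hf).image toLex))

lemma lmax_mem (f : (Fin n → ℕ) →₀ k) (hf : f ≠ 0) : lmax f hf ∈ f.support := by
  obtain ⟨a, ha, hax⟩ := Finset.mem_image.1
    ((f.support.image (toLex : (Fin n → ℕ) → Lex (Fin n → ℕ))).max'_mem
      ((Finsupp.support_nonempty_iff.2 hf).image toLex))
  rw [lmax, ← hax]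
  exact ha

lemma lmin_mem (f : (Fin n → ℕ) →₀ k) (hf : f ≠ 0) : lmin f hf ∈ f.support := by
  obtain ⟨a, ha, hax⟩ := Finset.mem_image.1
    ((f.support.image (toLex : (Fin n → ℕ) → Lex (Fin n → ℕ))).min'_mem
      ((Finsupp.support_nonempty_iff.2 hf).image toLex))
  rw [lmin, ← hax]
  exact ha

lemma le_lmax (f : (Fin n → ℕ) →₀ k) (hf : f ≠ 0) {a : Fin n → ℕ} (ha : a ∈ f.support) :
    toLex a ≤ toLex (lmax f hf) := by
  simpa only [lmax, toLex_ofLex] using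
    Finset.le_max' _ (toLex a) (Finset.mem_image_of_mem toLex ha)

lemma lmin_le (f : (Fin n → ℕ) →₀ k) (hf : f ≠ 0) {a : Fin n → ℕ} (ha : a ∈ f.support) :
    toLex (lmin f hf) ≤ toLex a := by
  simpa only [lmin, toLex_ofLex] using
    Finset.min'_le _ (toLex a) (Finset.mem_image_of_mem toLex ha)

lemma tmul_apply_sum (f g : (Fin n → ℕ) →₀ k) (x : Fin n → ℕ) :
    tmul p f g x =
      ∑ a ∈ f.support, ∑ b ∈ g.support,
        if a + b = x then f a * g b * sg p a b else 0 := by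
  rw [tmul, Finsupp.lsum_apply, LinearMap.finsupp_sum_apply, Finsupp.sum_apply, Finsupp.sum]
  refine Finset.sum_congr rfl fun a ha => ?_
  rw [LinearMap.toSpanSingleton_apply, LinearMap.smul_apply, Finsupp.lsum_apply,
    Finsupp.smul_apply, Finsupp.sum_apply, Finsupp.sum, Finset.smul_sum]
  refine Finset.sum_congr rfl fun b hb => ?_
  rw [LinearMap.toSpanSingleton_apply, Finsupp.smul_apply, Finsupp.single_apply]
  by_cases h : a + b = x
  · rw [if_pos h, if_pos h, smul_eq_mul, smul_eq_mul]
    ring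
  · rw [if_neg h, if_neg h, smul_zero, smul_zero]

lemma tmul_eq_zero_coeff (f g : (Fin n → ℕ) →₀ k) (x : Fin n → ℕ)
    (h : ∀ a ∈ f.support, ∀ b ∈ g.support, a + b ≠ x) : tmul p f g x = 0 := by
  rw [tmul_apply_sum]
  exact Finset.sum_eq_zero fun a ha =>
    Finset.sum_eq_zero fun b hb => if_neg (h a ha b hb)

lemma support_tmul_exists (f g : (Fin n → ℕ) →₀ k) (x : Fin n → ℕ)
    (hx : x ∈ (tmul p f g).support) : ∃ a ∈ f.support, ∃ b ∈ g.support, a + b = x := by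
  by_contra hcon
  push_neg at hcon
  exact (Finsupp.mem_support_iff.1 hx) (tmul_eq_zero_coeff p f g x hcon)

lemma tmul_coeff_unique (f g : (Fin n → ℕ) →₀ k) (a0 b0 : Fin n → ℕ)
    (h : ∀ a ∈ f.support, ∀ b ∈ g.support, a + b = a0 + b0 → a = a0 ∧ b = b0) :
    tmul p f g (a0 + b0) = f a0 * g b0 * sg p a0 b0 := by
  rw [tmul_apply_sum]
  by_cases ha0 : a0 ∈ f.support
  · rw [Finset.sum_eq_single a0]
    · by_cases hb0 : b0 ∈ g.support
      · rw [Finset.sum_eq_single b0]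
        · rw [if_pos rfl]
        · intro b hb hbne
          exact if_neg fun hc => hbne ((h a0 ha0 b hb hc).2)
        · intro hb0'
          rw [Finsupp.notMem_support_iff.1 hb0', if_pos rfl, mul_zero, zero_mul]
      · rw [Finsupp.notMem_support_iff.1 hb0, mul_zero, zero_mul]
        exact Finset.sum_eq_zero fun b hb => by
          by_cases hc : a0 + b = a0 + b0
          · exact absurd ((h a0 ha0 b hb hc).2 ▸ hb) hb0
          · exact if_neg hc
    · intro a ha hane
      exact Finset.sum_eq_zero fun b hb => if_neg fun hc => hane ((h a ha b hb hc).1)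
    · intro ha0'
      exact absurd ha0 ha0'
  · rw [Finsupp.notMem_support_iff.1 ha0, zero_mul, zero_mul]
    exact Finset.sum_eq_zero fun a ha => Finset.sum_eq_zero fun b hb => by
      by_cases hc : a + b = a0 + b0
      · exact absurd ((h a ha b hb hc).1 ▸ ha) ha0
      · exact if_neg hc

lemma tmul_coeff_lmax (hp : ∀ i j, p i j * p j i = 1) (f g : (Fin n → ℕ) →₀ k) (hf : f ≠ 0) (hg : g ≠ 0) :
    tmul p f g (lmax f hf + lmax g hg) ≠ 0 := by
  rw [tmul_coeff_unique p f g _ _ fun a ha b hb hc =>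
    lex_max_unique (le_lmax f hf ha) (le_lmax g hg hb) hc]
  exact mul_ne_zero (mul_ne_zero (Finsupp.mem_support_iff.1 (lmax_mem f hf))
    (Finsupp.mem_support_iff.1 (lmax_mem g hg))) (sg_ne_zero p hp _ _)

lemma tmul_coeff_lmin (hp : ∀ i j, p i j * p j i = 1) (f g : (Fin n → ℕ) →₀ k) (hf : f ≠ 0) (hg : g ≠ 0) :
    tmul p f g (lmin f hf + lmin g hg) ≠ 0 := by
  rw [tmul_coeff_unique p f g _ _ fun a ha b hb hc =>
    lex_min_unique (lmin_le f hf ha) (lmin_le g hg hb) hc]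
  exact mul_ne_zero (mul_ne_zero (Finsupp.mem_support_iff.1 (lmin_mem f hf))
    (Finsupp.mem_support_iff.1 (lmin_mem g hg))) (sg_ne_zero p hp _ _)

lemma tmul_ne_zero (hp : ∀ i j, p i j * p j i = 1) (f g : (Fin n → ℕ) →₀ k) (hf : f ≠ 0) (hg : g ≠ 0) :
    tmul p f g ≠ 0 := fun h => by
  have h2 := tmul_coeff_lmax p hp f g hf hg
  rw [h] at h2
  exact h2 rfl

lemma lmax_tmul (hp : ∀ i j, p i j * p j i = 1) (f g : (Fin n → ℕ) →₀ k) (hf : f ≠ 0) (hg : g ≠ 0) :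
    lmax (tmul p f g) (tmul_ne_zero p hp f g hf hg) = lmax f hf + lmax g hg := by
  have hmem : lmax f hf + lmax g hg ∈ (tmul p f g).support :=
    Finsupp.mem_support_iff.2 (tmul_coeff_lmax p hp f g hf hg)
  refine toLex.injective (le_antisymm ?_ (le_lmax _ _ hmem))
  obtain ⟨a, ha, b, hb, hab⟩ := support_tmul_exists p f g _
    (lmax_mem (tmul p f g) (tmul_ne_zero p hp f g hf hg))
  rw [← hab]
  exact le_trans (lex_add_le_left a (le_lmax g hg hb))
    (lex_add_le_right (lmax g hg) (le_lmax f hf ha))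

lemma lmin_tmul (hp : ∀ i j, p i j * p j i = 1) (f g : (Fin n → ℕ) →₀ k) (hf : f ≠ 0) (hg : g ≠ 0) :
    lmin (tmul p f g) (tmul_ne_zero p hp f g hf hg) = lmin f hf + lmin g hg := by
  have hmem : lmin f hf + lmin g hg ∈ (tmul p f g).support :=
    Finsupp.mem_support_iff.2 (tmul_coeff_lmin p hp f g hf hg)
  refine toLex.injective (le_antisymm (lmin_le _ _ hmem) ?_)
  obtain ⟨a, ha, b, hb, hab⟩ := support_tmul_exists p f g _
    (lmin_mem (tmul p f g) (tmul_ne_zero p hp f g hf hg))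
  rw [← hab]
  exact le_trans (lex_add_le_right (lmin g hg) (lmin_le f hf ha))
    (lex_add_le_left a (lmin_le g hg hb))

lemma tmul_right_cancel (hp : ∀ i j, p i j * p j i = 1) (z u v : (Fin n → ℕ) →₀ k) (hz : z ≠ 0)
    (h : tmul p u z = tmul p v z) : u = v := by
  by_contra hne
  have hsub : tmul p (u - v) z = 0 := by
    rw [map_sub, LinearMap.sub_apply, h, sub_self]
  exact tmul_ne_zero p hp (u - v) z (sub_ne_zero.2 hne) hz hsub

lemma lmax_single (e : Fin n → ℕ) (r : k) (h : Finsupp.single e r ≠ 0) :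
    lmax (Finsupp.single e r) h = e := by
  have hr : r ≠ 0 := fun h0 => h (by rw [h0, Finsupp.single_zero])
  have hm := lmax_mem (Finsupp.single e r) h
  rw [Finsupp.support_single_ne_zero e hr] at hm
  exact Finset.mem_singleton.1 hm

lemma lmin_single (e : Fin n → ℕ) (r : k) (h : Finsupp.single e r ≠ 0) :
    lmin (Finsupp.single e r) h = e := by
  have hr : r ≠ 0 := fun h0 => h (by rw [h0, Finsupp.single_zero])
  have hm := lmin_mem (Finsupp.single e r) h
  rw [Finsupp.support_single_ne_zero e hr] at hm
  exact Finset.mem_singleton.1 hm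

lemma lmax_congr (f g : (Fin n → ℕ) →₀ k) (hf : f ≠ 0) (h : f = g) :
    lmax f hf = lmax g (h ▸ hf) := by subst h; rfl

lemma lmin_congr (f g : (Fin n → ℕ) →₀ k) (hf : f ≠ 0) (h : f = g) :
    lmin f hf = lmin g (h ▸ hf) := by subst h; rfl

end Order

section Main

variable (p : Fin n → Fin n → k) (hp : ∀ i j, p i j * p j i = 1) (hpdiag : ∀ i, p i i = 1)

lemma Phi_decomp (N : ℕ) (c : Fin N → k) (d : Fin N → Fin n → ℕ) :
    Phi p hp hpdiag (∑ j : Fin N, c j • skewMonomial p (d j)) =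
      ∑ j : Fin N, Finsupp.single (d j) (c j) := by
  rw [Phi, map_sum, LinearMap.sum_apply]
  refine Finset.sum_congr rfl fun j _ => ?_
  rw [map_smul, LinearMap.smul_apply,
    show (phi p hp hpdiag) (skewMonomial p (d j)) (Finsupp.single 0 1)
      = Phi p hp hpdiag (skewMonomial p (d j)) from rfl,
    Phi_monomial, Finsupp.smul_single', mul_one]

lemma sum_single_inj_apply {N : ℕ} (u : Fin N → Fin n → ℕ) (hu : Function.Injective u)
    (r : Fin N → k) (j0 : Fin N) :
    (∑ j : Fin N, Finsupp.single (u j) (r j)) (u j0) = r j0 := by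
  rw [Finset.sum_apply', Finset.sum_eq_single j0]
  · rw [Finsupp.single_eq_same]
  · intro j _ hne
    exact Finsupp.single_eq_of_ne fun hc => hne (hu hc.symm)
  · intro h
    exact absurd (Finset.mem_univ j0) h

end Main

/-- Let `z` be a nonzero normal element of the skew polynomial ring `S_P`, with
decomposition `z = z_1 + ⋯ + z_N` into its nonzero `ℕ^n`-homogeneous components
`z_j = c_j • x^{d_j}` (the degrees `d_j` pairwise distinct).  Then each `z_j` is
normal and `η_{z_j} = η_z`, i.e. whenever `z * a = w * z` we have `z_j * a = w * z_j`. -/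
theorem skewPoly_homogeneous_components_normal (p : Fin n → Fin n → k)
    (hp : ∀ i j, p i j * p j i = 1) (hpdiag : ∀ i, p i i = 1)
    (z : SkewPoly p) (hz0 : z ≠ 0)
    (hznormal : Set.range (fun w => w * z) = Set.range (fun w => z * w))
    (N : ℕ) (c : Fin N → k) (d : Fin N → Fin n → ℕ)
    (hc : ∀ j, c j ≠ 0) (hd : Function.Injective d)
    (hdecomp : z = ∑ j : Fin N, c j • skewMonomial p (d j)) :
    (∀ j : Fin N,
        Set.range (fun w => w * (c j • skewMonomial p (d j))) =
          Set.range (fun w => (c j • skewMonomial p (d j)) * w)) ∧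
    (∀ (a w : SkewPoly p), z * a = w * z →
        ∀ j : Fin N, (c j • skewMonomial p (d j)) * a = w * (c j • skewMonomial p (d j))) := by
  classical
  set Z := Phi p hp hpdiag z with hZdef
  have hZ : Z = ∑ j : Fin N, Finsupp.single (d j) (c j) := by
    rw [hZdef, hdecomp, Phi_decomp]
  have hZj : ∀ j, Phi p hp hpdiag (c j • skewMonomial p (d j)) = Finsupp.single (d j) (c j) := by
    intro j
    rw [Phi_smul, Phi_monomial, Finsupp.smul_single', mul_one]
  have hZne : Z ≠ 0 := by
    intro h0
    apply hz0
    have h1 := congrArg (psi p) (hZdef ▸ h0 : Phi p hp hpdiag z = 0)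
    rwa [psi_Phi, map_zero] at h1
  have step1 : ∀ e : Fin n → ℕ, ∃ v : (Fin n → ℕ) →₀ k,
      tmul p Z (Finsupp.single e 1) = tmul p v Z ∧
      ∀ j, tmul p (Finsupp.single (d j) (c j)) (Finsupp.single e 1)
          = tmul p v (Finsupp.single (d j) (c j)) := by
    intro e
    obtain ⟨w, hw⟩ : ∃ w, w * z = z * skewMonomial p e := by
      have h1 : z * skewMonomial p e ∈ Set.range (fun w => z * w) := ⟨_, rfl⟩
      rw [← hznormal] at h1
      exact h1
    have h2 : tmul p Z (Finsupp.single e 1) = tmul p (Phi p hp hpdiag w) Z := by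
      have h3 := congrArg (Phi p hp hpdiag) hw
      rw [Phi_mul, Phi_mul, Phi_monomial] at h3
      exact h3.symm
    have hse : (Finsupp.single e 1 : (Fin n → ℕ) →₀ k) ≠ 0 :=
      fun h => one_ne_zero (Finsupp.single_eq_zero.1 h)
    have hW : Phi p hp hpdiag w ≠ 0 := by
      intro h0
      rw [h0, map_zero, LinearMap.zero_apply] at h2
      exact tmul_ne_zero p hp Z _ hZne hse h2
    have h4 := lmax_congr _ _ (tmul_ne_zero p hp Z _ hZne hse) h2
    rw [lmax_tmul p hp Z _ hZne hse, lmax_tmul p hp _ Z hW hZne,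
      lmax_single e 1 hse] at h4
    have h5 := lmin_congr _ _ (tmul_ne_zero p hp Z _ hZne hse) h2
    rw [lmin_tmul p hp Z _ hZne hse, lmin_tmul p hp _ Z hW hZne,
      lmin_single e 1 hse] at h5
    have hmax : e = lmax (Phi p hp hpdiag w) hW := by
      rw [add_comm (lmax (Phi p hp hpdiag w) hW) (lmax Z hZne)] at h4
      exact add_left_cancel h4
    have hmin : e = lmin (Phi p hp hpdiag w) hW := by
      rw [add_comm (lmin (Phi p hp hpdiag w) hW) (lmin Z hZne)] at h5
      exact add_left_cancel h5
    have hsupp : (Phi p hp hpdiag w).support ⊆ {e} := by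
      intro s hs
      refine Finset.mem_singleton.2 (toLex.injective (le_antisymm ?_ ?_))
      · rw [hmax]
        exact le_lmax _ hW hs
      · rw [hmin]
        exact lmin_le _ hW hs
    have hWs : Phi p hp hpdiag w = Finsupp.single e (Phi p hp hpdiag w e) :=
      Finsupp.support_subset_singleton.1 hsupp
    set lam := Phi p hp hpdiag w e with hlam
    have hZe : tmul p Z (Finsupp.single e 1) =
        ∑ j : Fin N, Finsupp.single (d j + e) (c j * sg p (d j) e) := by
      rw [hZ, map_sum, LinearMap.sum_apply]
      refine Finset.sum_congr rfl fun j _ => ?_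
      rw [tmul_single_single, mul_one]
    have hWe : tmul p (Finsupp.single e lam) Z =
        ∑ j : Fin N, Finsupp.single (e + d j) (lam * c j * sg p e (d j)) := by
      rw [hZ, map_sum]
      refine Finset.sum_congr rfl fun j _ => ?_
      rw [tmul_single_single]
    have hcoef : ∀ j, c j * sg p (d j) e = lam * c j * sg p e (d j) := by
      intro j
      have h6 : tmul p Z (Finsupp.single e 1) (d j + e)
          = tmul p (Finsupp.single e lam) Z (d j + e) := by
        rw [h2, ← hWs]
      rw [hZe, hWe] at h6
      have hL := sum_single_inj_apply (fun j' => d j' + e)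
        (fun a b hab => hd (add_right_cancel hab)) (fun j' => c j' * sg p (d j') e) j
      have hR := sum_single_inj_apply (fun j' => e + d j')
        (fun a b hab => hd (add_left_cancel hab)) (fun j' => lam * c j' * sg p e (d j')) j
      rw [add_comm e (d j)] at hR
      rw [hL, hR] at h6
      exact h6
    refine ⟨Finsupp.single e lam, by rw [h2, ← hWs], fun j => ?_⟩
    rw [tmul_single_single, tmul_single_single, mul_one, add_comm e (d j), hcoef j]
  have main : ∀ (a w : SkewPoly p), z * a = w * z →
      ∀ j, (c j • skewMonomial p (d j)) * a = w * (c j • skewMonomial p (d j)) := by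
    intro a w hzw
    choose v hv1 hv2 using step1
    have hPhi : tmul p Z (Phi p hp hpdiag a) = tmul p (Phi p hp hpdiag w) Z := by
      have h3 := congrArg (Phi p hp hpdiag) hzw
      rw [Phi_mul, Phi_mul] at h3
      exact h3
    set A' := Phi p hp hpdiag a with hA'
    have hexp : ∀ u : (Fin n → ℕ) →₀ k,
        tmul p u A' = A'.sum fun e ce => ce • tmul p u (Finsupp.single e 1) := by
      intro u
      conv_lhs => rw [← Finsupp.sum_single A']
      rw [map_finsuppSum]
      refine Finsupp.sum_congr fun e _ => ?_
      rw [show Finsupp.single e (A' e) = A' e • Finsupp.single e (1 : k) from by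
        rw [Finsupp.smul_single', mul_one], map_smul]
    have hsum : ∀ u : (Fin n → ℕ) →₀ k,
        tmul p (A'.sum fun e ce => ce • v e) u
          = A'.sum fun e ce => ce • tmul p (v e) u := by
      intro u
      rw [map_finsuppSum, LinearMap.finsupp_sum_apply]
      refine Finsupp.sum_congr fun e _ => ?_
      rw [map_smul, LinearMap.smul_apply]
    have hwu : Phi p hp hpdiag w = A'.sum fun e ce => ce • v e := by
      refine tmul_right_cancel p hp Z _ _ hZne ?_
      rw [← hPhi, hexp Z, hsum Z]
      refine Finsupp.sum_congr fun e _ => ?_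
      rw [hv1 e]
    intro j
    apply Phi_injective p hp hpdiag
    rw [Phi_mul, Phi_mul, hZj j, hexp (Finsupp.single (d j) (c j)), hwu,
      hsum (Finsupp.single (d j) (c j))]
    refine Finsupp.sum_congr fun e _ => ?_
    rw [hv2 e j]
  refine ⟨fun j => ?_, main⟩
  ext y
  simp only [Set.mem_range]
  constructor
  · rintro ⟨w, rfl⟩
    obtain ⟨a, ha⟩ : ∃ a, z * a = w * z := by
      have h1 : w * z ∈ Set.range (fun w' => w' * z) := ⟨w, rfl⟩
      rw [hznormal] at h1
      obtain ⟨a, ha⟩ := h1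
      exact ⟨a, ha⟩
    exact ⟨a, main a w ha j⟩
  · rintro ⟨a, rfl⟩
    obtain ⟨w, hwz⟩ : ∃ w, z * a = w * z := by
      have h1 : z * a ∈ Set.range (fun w' => z * w') := ⟨a, rfl⟩
      rw [← hznormal] at h1
      obtain ⟨w1, hw1⟩ := h1
      exact ⟨w1, hw1.symm⟩
    exact ⟨w, (main a w hwz j).symm⟩
end

section
/- Let z be a nonzero normal element of the skew polynomial ring S_P = k_P[x_1,…,x_n]. Then for each i there exists λ_i ∈ k^× such that η_{x_i}(z) = λ_i z, i.e., x_i z = λ_i z x_i. -/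
variable {k : Type*} [Field k] {n : ℕ}

namespace SkewProof
variable (p : Fin n → Fin n → k)

lemma skewX_eq_mkAlgHom (i : Fin n) :
    skewX p i = RingQuot.mkAlgHom k (skewRel p) (FreeAlgebra.ι k i) := by
  rw [skewX, ← RingQuot.mkAlgHom_coe k]; rfl

lemma skew_rel (i j : Fin n) :
    skewX p j * skewX p i = p i j • (skewX p i * skewX p j) := by
  have hrel : skewRel p (FreeAlgebra.ι k j * FreeAlgebra.ι k i)
      (p i j • (FreeAlgebra.ι k i * FreeAlgebra.ι k j)) := ⟨i, j, rfl, rfl⟩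
  have h := RingQuot.mkAlgHom_rel k hrel
  simpa [map_mul, map_smul, skewX_eq_mkAlgHom] using h

lemma skew_rel_pow (i j : Fin n) (m : ℕ) :
    skewX p j * (skewX p i) ^ m = (p i j) ^ m • ((skewX p i) ^ m * skewX p j) := by
  induction m with
  | zero => simp
  | succ m ih =>
      rw [pow_succ, ← mul_assoc, ih, smul_mul_assoc, mul_assoc, skew_rel p i j,
        mul_smul_comm, smul_smul, ← pow_succ, mul_assoc]


lemma p_ne_zero (hp : ∀ i j, p i j * p j i = 1) (i j : Fin n) : p i j ≠ 0 := by
  intro h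
  have := hp i j
  rw [h, zero_mul] at this
  exact zero_ne_one this

def Cc (j : Fin n) (b : Fin n →₀ ℕ) : k :=
  ∏ l, (if l < j then p l j else 1) ^ b l

lemma Cc_ne_zero (hp : ∀ i j, p i j * p j i = 1) (j : Fin n) (b : Fin n →₀ ℕ) :
    Cc p j b ≠ 0 := by
  refine Finset.prod_ne_zero_iff.2 fun l _ => pow_ne_zero _ ?_
  split_ifs
  · exact p_ne_zero p hp l j
  · exact one_ne_zero

lemma Cc_add (j : Fin n) (b b' : Fin n →₀ ℕ) :
    Cc p j (b + b') = Cc p j b * Cc p j b' := by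
  rw [Cc, Cc, Cc, ← Finset.prod_mul_distrib]
  refine Finset.prod_congr rfl fun l _ => ?_
  rw [Finsupp.add_apply, pow_add]

@[simp] lemma Cc_zero (j : Fin n) : Cc p j 0 = 1 := by
  simp [Cc]

lemma Cc_single (j i : Fin n) (m : ℕ) :
    Cc p j (Finsupp.single i m) = (if i < j then p i j else 1) ^ m := by
  rw [Cc]
  rw [Finset.prod_eq_single i (fun l _ hl => by
    simp [Finsupp.single_apply, Ne.symm hl])
    (fun h => absurd (Finset.mem_univ i) h)]
  rw [Finsupp.single_apply, if_pos rfl]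


lemma Pm_succ (a : Fin n → ℕ) (j : Fin n) (m : ℕ) (hm : m < n) :
    (∏ l : Fin n, if (l : ℕ) < m + 1 then (p l j) ^ a l else 1)
      = (∏ l : Fin n, if (l : ℕ) < m then (p l j) ^ a l else 1) * (p ⟨m, hm⟩ j) ^ a ⟨m, hm⟩ := by
  have key : ∀ l : Fin n, (if (l : ℕ) < m + 1 then (p l j) ^ a l else 1)
      = (if (l : ℕ) < m then (p l j) ^ a l else 1) *
        (if l = ⟨m, hm⟩ then (p l j) ^ a l else 1) := by
    intro l
    by_cases h1 : (l : ℕ) < m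
    · have h3 : l ≠ ⟨m, hm⟩ := by
        intro h; rw [h] at h1; simp at h1
      simp [h1, Nat.lt_succ_of_lt h1, h3]
    · by_cases h4 : (l : ℕ) = m
      · have h5 : l = ⟨m, hm⟩ := Fin.ext h4
        simp [h1, h5, Nat.lt_succ_iff, h4]
      · have h6 : ¬ (l : ℕ) < m + 1 := by omega
        have h3 : l ≠ ⟨m, hm⟩ := by
          intro h; rw [h] at h4; simp at h4
        simp [h1, h6, h3]
  rw [Finset.prod_congr rfl fun l _ => key l, Finset.prod_mul_distrib,
    Finset.prod_ite_eq' Finset.univ (⟨m, hm⟩ : Fin n) (fun l => (p l j) ^ a l),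
    if_pos (Finset.mem_univ _)]

lemma skew_take (a : Fin n → ℕ) (j : Fin n) (m : ℕ) :
    skewX p j * ((List.ofFn fun i => skewX p i ^ a i).take m).prod
      = (∏ l : Fin n, if (l : ℕ) < m then (p l j) ^ a l else 1) •
        (((List.ofFn fun i => skewX p i ^ a i).take m).prod * skewX p j) := by
  induction m with
  | zero => simp
  | succ m ih =>
      by_cases hm : m < n
      · have hlen : m < (List.ofFn fun i => skewX p i ^ a i).length := by
          simpa using hm
        rw [List.prod_take_succ _ m hlen, List.getElem_ofFn]
        rw [← mul_assoc, ih, smul_mul_assoc, mul_assoc,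
          skew_rel_pow p _ j (a _), mul_smul_comm, smul_smul, Pm_succ p a j m hm]
        rw [mul_assoc]
      · have hlen : (List.ofFn fun i => skewX p i ^ a i).length ≤ m := by
          simpa using Nat.le_of_not_lt hm
        have h1 : List.take (m+1) (List.ofFn fun i => skewX p i ^ a i) = (List.ofFn fun i => skewX p i ^ a i) := List.take_of_length_le (hlen.trans (Nat.le_succ m))
        have h2 : List.take m (List.ofFn fun i => skewX p i ^ a i) = (List.ofFn fun i => skewX p i ^ a i) := List.take_of_length_le hlen
        have heq : (∏ l : Fin n, if (l : ℕ) < m + 1 then (p l j) ^ a l else 1)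
            = (∏ l : Fin n, if (l : ℕ) < m then (p l j) ^ a l else 1) := by
          refine Finset.prod_congr rfl fun l _ => ?_
          have h1 : (l : ℕ) < m := lt_of_lt_of_le l.isLt (by simpa using hlen)
          rw [if_pos h1, if_pos (Nat.lt_succ_of_lt h1)]
        rw [h1, heq, ← h2]
        exact ih
lemma Pm_eq_Cc (j : Fin n) (b : Fin n →₀ ℕ) :
    (∏ l : Fin n, if (l : ℕ) < (j : ℕ) then p l j ^ b l else 1) = Cc p j b := by
  rw [Cc]
  refine Finset.prod_congr rfl fun l _ => ?_
  simp only [← Fin.lt_def]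
  split_ifs with h
  · rfl
  · rw [one_pow]

lemma monomial_split (a : Fin n → ℕ) (j : Fin n) :
    skewMonomial p a
      = ((List.ofFn fun i => skewX p i ^ a i).take (j : ℕ)).prod * (skewX p j ^ a j) *
        ((List.ofFn fun i => skewX p i ^ a i).drop ((j : ℕ) + 1)).prod := by
  rw [skewMonomial]
  conv_lhs => rw [← List.take_append_drop (j : ℕ) (List.ofFn fun i => skewX p i ^ a i)]
  have hj : (j : ℕ) < (List.ofFn fun i => skewX p i ^ a i).length := by simp
  rw [List.prod_append, List.drop_eq_getElem_cons hj, List.prod_cons, List.getElem_ofFn,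
    ← mul_assoc]

lemma keyA (j : Fin n) (b : Fin n →₀ ℕ) :
    skewX p j * skewMonomial p ⇑b
      = Cc p j b • skewMonomial p ⇑(b + Finsupp.single j (1:ℕ)) := by
  have htake : (List.ofFn fun i => skewX p i ^ (⇑(b + Finsupp.single j (1:ℕ)) : Fin n → ℕ) i).take (j : ℕ)
      = (List.ofFn fun i => skewX p i ^ b i).take (j : ℕ) := by
    apply List.ext_getElem (by simp)
    intro t h1 h2
    have h1' : t < min (j : ℕ) n := by simpa using h1
    have htn : t < n := lt_of_lt_of_le h1' (min_le_right _ _)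
    have htj : t < (j : ℕ) := lt_of_lt_of_le h1' (min_le_left _ _)
    rw [List.getElem_take, List.getElem_take, List.getElem_ofFn, List.getElem_ofFn]
    have hne : j ≠ (⟨t, htn⟩ : Fin n) := by
      intro h; rw [Fin.ext_iff] at h; simp at h; omega
    congr 1
    simp [Finsupp.single_apply, hne]
  have hdrop : (List.ofFn fun i => skewX p i ^ (⇑(b + Finsupp.single j (1:ℕ)) : Fin n → ℕ) i).drop ((j : ℕ) + 1)
      = (List.ofFn fun i => skewX p i ^ b i).drop ((j : ℕ) + 1) := by
    apply List.ext_getElem (by simp)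
    intro t h1 h2
    have h1' : (j : ℕ) + 1 + t < n := by
      have := h1
      simp [List.length_drop] at this
      omega
    rw [List.getElem_drop, List.getElem_drop, List.getElem_ofFn, List.getElem_ofFn]
    have hne : j ≠ (⟨(j : ℕ) + 1 + t, h1'⟩ : Fin n) := by
      intro h; rw [Fin.ext_iff] at h; simp at h; omega
    congr 1
    simp [Finsupp.single_apply, hne]
  have hexp : (⇑(b + Finsupp.single j (1:ℕ)) : Fin n → ℕ) j = b j + 1 := by
    simp
  rw [monomial_split p ⇑b j, monomial_split p ⇑(b + Finsupp.single j (1:ℕ)) j, htake, hdrop, hexp]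
  rw [← mul_assoc, ← mul_assoc, skew_take p ⇑b j (j : ℕ), Pm_eq_Cc p j b,
    smul_mul_assoc, smul_mul_assoc, mul_assoc _ (skewX p j) (skewX p j ^ b j), ← pow_succ']

abbrev VV (k : Type*) [Field k] (n : ℕ) := (Fin n →₀ ℕ) →₀ k

noncomputable def TT (j : Fin n) : VV k n →ₗ[k] VV k n :=
  Finsupp.lsum k fun b => Cc p j b • Finsupp.lsingle (b + Finsupp.single j (1:ℕ))

lemma TT_single (j : Fin n) (b : Fin n →₀ ℕ) (c : k) :
    TT p j (Finsupp.single b c)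
      = Finsupp.single (b + Finsupp.single j (1:ℕ)) (Cc p j b * c) := by
  rw [TT, Finsupp.lsum_single, LinearMap.smul_apply, Finsupp.lsingle_apply,
    Finsupp.smul_single, smul_eq_mul]

lemma TT_rel (hp : ∀ i j, p i j * p j i = 1) (hpdiag : ∀ i, p i i = 1) (i j : Fin n) :
    (TT p j : Module.End k (VV k n)) * TT p i
      = p i j • ((TT p i : Module.End k (VV k n)) * TT p j) := by
  rw [Module.End.mul_eq_comp, Module.End.mul_eq_comp]
  apply Finsupp.lhom_ext
  intro b c
  rw [LinearMap.smul_apply, LinearMap.comp_apply, LinearMap.comp_apply, TT_single, TT_single,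
    TT_single, TT_single, Finsupp.smul_single]
  have hind : b + Finsupp.single i (1:ℕ) + Finsupp.single j (1:ℕ)
      = b + Finsupp.single j (1:ℕ) + Finsupp.single i (1:ℕ) := add_right_comm _ _ _
  rw [hind]
  congr 1
  rw [Cc_add, Cc_add, Cc_single, Cc_single, pow_one, pow_one, smul_eq_mul]
  rcases lt_trichotomy i j with h | h | h
  · rw [if_pos h, if_neg (not_lt.2 h.le)]
    ring
  · subst h
    rw [hpdiag i, one_mul]
  · rw [if_neg (not_lt.2 h.le), if_pos h]
    linear_combination (-(Cc p j b * Cc p i b * c)) * hp i j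

variable (hp : ∀ i j, p i j * p j i = 1) (hpdiag : ∀ i, p i i = 1)

noncomputable def phi : SkewPoly p →ₐ[k] Module.End k (VV k n) :=
  RingQuot.liftAlgHom k ⟨FreeAlgebra.lift k fun i => (TT p i : Module.End k (VV k n)), by
    rintro u v ⟨i, j, rfl, rfl⟩
    rw [map_mul, map_smul, map_mul]
    simp only [FreeAlgebra.lift_ι_apply]
    exact TT_rel p hp hpdiag i j⟩

lemma phi_X (i : Fin n) : phi p hp hpdiag (skewX p i) = TT p i := by
  rw [skewX_eq_mkAlgHom, phi, RingQuot.liftAlgHom_mkAlgHom_apply, FreeAlgebra.lift_ι_apply]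

noncomputable def ev : SkewPoly p →ₗ[k] VV k n where
  toFun z := phi p hp hpdiag z (Finsupp.single 0 1)
  map_add' x y := by simp
  map_smul' c x := by simp

noncomputable def psi : VV k n →ₗ[k] SkewPoly p :=
  Finsupp.linearCombination k fun b : Fin n →₀ ℕ => skewMonomial p ⇑b

lemma psi_single (b : Fin n →₀ ℕ) (c : k) :
    psi p (Finsupp.single b c) = c • skewMonomial p ⇑b := by
  rw [psi, Finsupp.linearCombination_single]

lemma ev_apply (z : SkewPoly p) :
    ev p hp hpdiag z = phi p hp hpdiag z (Finsupp.single 0 1) := rfl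

lemma skewMonomial_zero : skewMonomial p (⇑(0 : Fin n →₀ ℕ)) = 1 := by
  rw [skewMonomial]
  refine List.prod_eq_one fun x hx => ?_
  rw [List.mem_ofFn] at hx
  obtain ⟨i, rfl⟩ := hx
  simp

lemma psi_phi (z : SkewPoly p) :
    ∀ v, psi p (phi p hp hpdiag z v) = z * psi p v := by
  obtain ⟨w, rfl⟩ := RingQuot.mkAlgHom_surjective k (skewRel p) z
  induction w using FreeAlgebra.induction with
  | grade0 c =>
      intro v
      rw [AlgHom.commutes, AlgHom.commutes, Module.algebraMap_end_apply, map_smul,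
        Algebra.smul_def]
  | grade1 i =>
      intro v
      rw [← skewX_eq_mkAlgHom, phi_X]
      induction v using Finsupp.induction_linear with
      | zero => simp
      | add f g hf hg => rw [map_add, map_add, hf, hg, map_add, mul_add]
      | single b c =>
          rw [TT_single, psi_single, psi_single, mul_smul_comm, keyA p i b, smul_smul, mul_comm c (Cc p i b)]
  | mul x y hx hy =>
      intro v
      rw [map_mul, map_mul, Module.End.mul_apply, hx, hy, mul_assoc]
  | add x y hx hy =>
      intro v
      rw [map_add, map_add, LinearMap.add_apply, map_add, hx, hy, add_mul]

lemma psi_ev (z : SkewPoly p) : psi p (ev p hp hpdiag z) = z := by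
  rw [ev_apply, psi_phi, psi_single, one_smul, skewMonomial_zero, mul_one]

lemma ev_injective : Function.Injective (ev p hp hpdiag) :=
  Function.LeftInverse.injective (psi_ev p hp hpdiag)

def Shift (z : SkewPoly p) (d : Fin n →₀ ℕ) : Prop :=
  ∀ (b : Fin n →₀ ℕ) (c : k), ∃ γ : k, γ ≠ 0 ∧
    phi p hp hpdiag z (Finsupp.single b c) = Finsupp.single (b + d) (γ * c)

lemma shift_one : Shift p hp hpdiag 1 0 := by
  intro b c
  exact ⟨1, one_ne_zero, by rw [map_one, Module.End.one_apply, add_zero, one_mul]⟩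

lemma shift_X (i : Fin n) : Shift p hp hpdiag (skewX p i) (Finsupp.single i (1:ℕ)) := by
  intro b c
  exact ⟨Cc p i b, Cc_ne_zero p hp i b, by rw [phi_X, TT_single]⟩

lemma shift_mul {z z' : SkewPoly p} {d d' : Fin n →₀ ℕ}
    (h : Shift p hp hpdiag z d) (h' : Shift p hp hpdiag z' d') :
    Shift p hp hpdiag (z * z') (d' + d) := by
  intro b c
  obtain ⟨γ', hγ'0, hγ'⟩ := h' b c
  obtain ⟨γ, hγ0, hγ⟩ := h (b + d') (γ' * c)
  refine ⟨γ * γ', mul_ne_zero hγ0 hγ'0, ?_⟩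
  rw [map_mul, Module.End.mul_apply, hγ', hγ, ← add_assoc, mul_assoc]

lemma shift_pow (i : Fin n) (m : ℕ) :
    Shift p hp hpdiag ((skewX p i) ^ m) (Finsupp.single i m) := by
  induction m with
  | zero => rw [pow_zero, Finsupp.single_zero]; exact shift_one p hp hpdiag
  | succ m ih =>
      have := shift_mul p hp hpdiag ih (shift_X p hp hpdiag i)
      rw [← pow_succ, ← Finsupp.single_add, add_comm 1 m] at this
      exact this

lemma shift_list (L : List ((Fin n →₀ ℕ) × SkewPoly p))
    (h : ∀ x ∈ L, Shift p hp hpdiag x.2 x.1) :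
    Shift p hp hpdiag ((L.map Prod.snd).prod) ((L.map Prod.fst).sum) := by
  induction L with
  | nil => simpa using shift_one p hp hpdiag
  | cons x L ih =>
      rw [List.map_cons, List.map_cons, List.prod_cons, List.sum_cons]
      have hx := h x List.mem_cons_self
      have hrest := ih fun y hy => h y (List.mem_cons_of_mem x hy)
      have := shift_mul p hp hpdiag hx hrest
      rwa [add_comm] at this

lemma shift_monomial (b : Fin n →₀ ℕ) :
    Shift p hp hpdiag (skewMonomial p ⇑b) b := by
  have h := shift_list p hp hpdiag
    (List.ofFn fun i => (Finsupp.single i (b i), skewX p i ^ b i))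
    (by
      intro x hx
      rw [List.mem_ofFn] at hx
      obtain ⟨i, rfl⟩ := hx
      exact shift_pow p hp hpdiag i (b i))
  rw [List.map_ofFn, List.map_ofFn] at h
  have h1 : (List.ofFn (Prod.snd ∘ fun i => (Finsupp.single i (b i), skewX p i ^ b i))).prod
      = skewMonomial p ⇑b := by
    rw [skewMonomial]; rfl
  have h2 : (List.ofFn (Prod.fst ∘ fun i => (Finsupp.single i (b i), skewX p i ^ b i))).sum
      = b := by
    rw [List.sum_ofFn]
    exact Finsupp.univ_sum_single b
  rwa [h1, h2] at h

lemma end_apply_decomp (E : Module.End k (VV k n)) (v : VV k n) :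
    E v = ∑ b ∈ v.support, E (Finsupp.single b (v b)) := by
  conv_lhs => rw [← Finsupp.sum_single v, Finsupp.sum, map_sum]

lemma phi_apply_eq (z : SkewPoly p) (v : VV k n) :
    phi p hp hpdiag z v
      = ∑ a ∈ (ev p hp hpdiag z).support, (ev p hp hpdiag z) a •
          ∑ b ∈ v.support, phi p hp hpdiag (skewMonomial p ⇑a) (Finsupp.single b (v b)) := by
  have hz : z = ∑ a ∈ (ev p hp hpdiag z).support,
      (ev p hp hpdiag z) a • skewMonomial p ⇑a := by
    conv_lhs => rw [← psi_ev p hp hpdiag z]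
    rw [psi, Finsupp.linearCombination_apply, Finsupp.sum]
  conv_lhs => rw [hz]
  rw [map_sum, LinearMap.sum_apply]
  refine Finset.sum_congr rfl fun a ha => ?_
  rw [map_smul, LinearMap.smul_apply, end_apply_decomp]

lemma phi_coeff_ne (z : SkewPoly p) (v : VV k n) (astar bstar : Fin n →₀ ℕ)
    (ha : astar ∈ (ev p hp hpdiag z).support) (hb : bstar ∈ v.support)
    (hkey : ∀ a ∈ (ev p hp hpdiag z).support, ∀ b ∈ v.support,
      b + a = bstar + astar → a = astar ∧ b = bstar) :
    phi p hp hpdiag z v (bstar + astar) ≠ 0 := by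
  rw [phi_apply_eq, Finsupp.finset_sum_apply]
  rw [Finset.sum_eq_single_of_mem astar ha (fun a hamem hane => by
    rw [Finsupp.smul_apply, Finsupp.finset_sum_apply,
      Finset.sum_eq_zero (fun b hbmem => by
        obtain ⟨γ, hγ0, hγ⟩ := shift_monomial p hp hpdiag a b (v b)
        rw [hγ]
        exact Finsupp.single_eq_of_ne' fun h => hane ((hkey a hamem b hbmem h).1)),
      smul_zero])]
  rw [Finsupp.smul_apply, Finsupp.finset_sum_apply]
  rw [Finset.sum_eq_single_of_mem bstar hb (fun b hbmem hbne => by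
    obtain ⟨γ, hγ0, hγ⟩ := shift_monomial p hp hpdiag astar b (v b)
    rw [hγ]
    exact Finsupp.single_eq_of_ne' fun h => hbne ((hkey astar ha b hbmem h).2))]
  obtain ⟨γ, hγ0, hγ⟩ := shift_monomial p hp hpdiag astar bstar (v bstar)
  rw [hγ, Finsupp.single_eq_same, smul_eq_mul]
  exact mul_ne_zero (Finsupp.mem_support_iff.1 ha)
    (mul_ne_zero hγ0 (Finsupp.mem_support_iff.1 hb))

lemma phi_support_subset (z : SkewPoly p) (v : VV k n) (d : Fin n →₀ ℕ)
    (hd : d ∈ (phi p hp hpdiag z v).support) :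
    ∃ a ∈ (ev p hp hpdiag z).support, ∃ b ∈ v.support, d = b + a := by
  by_contra hcon
  push_neg at hcon
  apply Finsupp.mem_support_iff.1 hd
  rw [phi_apply_eq, Finsupp.finset_sum_apply]
  refine Finset.sum_eq_zero fun a ha => ?_
  rw [Finsupp.smul_apply, Finsupp.finset_sum_apply,
    Finset.sum_eq_zero fun b hb => ?_, smul_zero]
  obtain ⟨γ, hγ0, hγ⟩ := shift_monomial p hp hpdiag a b (v b)
  rw [hγ]
  exact Finsupp.single_eq_of_ne' fun h => hcon a ha b hb h.symm

lemma ev_X (i : Fin n) :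
    ev p hp hpdiag (skewX p i) = Finsupp.single (Finsupp.single i (1:ℕ)) 1 := by
  rw [ev_apply, phi_X, TT_single, zero_add, Cc_zero, one_mul]

end SkewProof

open SkewProof

/-- Let `z` be a nonzero normal element of the skew polynomial ring `S_P`.  Then for
each `i` there is `λ_i ∈ k^×` with `η_{x_i}(z) = λ_i z`, i.e. `x_i z = λ_i (z x_i)`. -/
theorem skewPoly_normal_eigenvalue (p : Fin n → Fin n → k)
    (hp : ∀ i j, p i j * p j i = 1) (hpdiag : ∀ i, p i i = 1)
    (z : SkewPoly p) (hz0 : z ≠ 0)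
    (hznormal : Set.range (fun w => w * z) = Set.range (fun w => z * w)) :
    ∀ i : Fin n, ∃ lam : k, lam ≠ 0 ∧ skewX p i * z = lam • (z * skewX p i) := by
  classical
  intro i
  obtain ⟨w, hw⟩ : ∃ w, z * w = skewX p i * z := by
    have hmem : skewX p i * z ∈ Set.range fun w => w * z := ⟨skewX p i, rfl⟩
    rw [hznormal] at hmem
    exact hmem
  have hinj := ev_injective p hp hpdiag
  have hζ0 : ev p hp hpdiag z ≠ 0 := fun h => hz0 (hinj (h.trans (map_zero _).symm))
  have hEQ : phi p hp hpdiag z (ev p hp hpdiag w)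
      = phi p hp hpdiag (skewX p i) (ev p hp hpdiag z) := by
    have h1 : ev p hp hpdiag (z * w) = phi p hp hpdiag z (ev p hp hpdiag w) := by
      rw [ev_apply, map_mul, Module.End.mul_apply, ← ev_apply]
    have h2 : ev p hp hpdiag (skewX p i * z)
        = phi p hp hpdiag (skewX p i) (ev p hp hpdiag z) := by
      rw [ev_apply, map_mul, Module.End.mul_apply, ← ev_apply]
    rw [← h1, ← h2, hw]
  have hXsupp : (ev p hp hpdiag (skewX p i)).support = {Finsupp.single i (1:ℕ)} := by
    rw [ev_X]
    exact Finsupp.support_single_ne_zero _ one_ne_zero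
  have hSζ : (ev p hp hpdiag z).support.Nonempty := Finsupp.support_nonempty_iff.2 hζ0
  obtain ⟨aM, haM, haMmax⟩ :=
    Finset.exists_max_image (ev p hp hpdiag z).support (fun a => toLex a) hSζ
  obtain ⟨am, ham, hammin⟩ :=
    Finset.exists_min_image (ev p hp hpdiag z).support (fun a => toLex a) hSζ
  have hXkey : ∀ astar ∈ (ev p hp hpdiag z).support,
      (∀ a ∈ (ev p hp hpdiag (skewX p i)).support, ∀ b ∈ (ev p hp hpdiag z).support,
        b + a = astar + Finsupp.single i (1:ℕ) → a = Finsupp.single i (1:ℕ) ∧ b = astar) := by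
    intro astar _ a ha b _ heq
    rw [hXsupp, Finset.mem_singleton] at ha
    subst ha
    exact ⟨rfl, add_right_cancel heq⟩
  have hω0 : ev p hp hpdiag w ≠ 0 := by
    intro h0
    have hzero : phi p hp hpdiag (skewX p i) (ev p hp hpdiag z) = 0 := by
      rw [← hEQ, h0, map_zero]
    have hne := phi_coeff_ne p hp hpdiag (skewX p i) (ev p hp hpdiag z)
      (Finsupp.single i (1:ℕ)) aM
      (by rw [hXsupp]; exact Finset.mem_singleton_self _) haM
      (by
        intro a ha b hb heq
        rw [hXsupp, Finset.mem_singleton] at ha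
        subst ha
        exact ⟨rfl, add_right_cancel heq⟩)
    exact hne (by rw [hzero]; rfl)
  have hTω : (ev p hp hpdiag w).support.Nonempty := Finsupp.support_nonempty_iff.2 hω0
  obtain ⟨bM, hbM, hbMmax⟩ :=
    Finset.exists_max_image (ev p hp hpdiag w).support (fun b => toLex b) hTω
  obtain ⟨bm, hbm, hbmmin⟩ :=
    Finset.exists_min_image (ev p hp hpdiag w).support (fun b => toLex b) hTω
  -- maximal coefficient of RHS is nonzero
  have hmemM : bM + aM ∈ (phi p hp hpdiag z (ev p hp hpdiag w)).support := by
    refine Finsupp.mem_support_iff.2 (phi_coeff_ne p hp hpdiag z (ev p hp hpdiag w)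
      aM bM haM hbM ?_)
    intro a ha b hb heq
    by_cases haa : a = aM
    · subst haa
      exact ⟨rfl, add_right_cancel heq⟩
    · exfalso
      have h1 : toLex a < toLex aM :=
        lt_of_le_of_ne (haMmax a ha) fun hh => haa (toLex_inj.1 hh)
      have h2 : toLex (b + a) < toLex (bM + aM) := by
        rw [toLex_add, toLex_add]
        calc toLex b + toLex a < toLex b + toLex aM := add_lt_add_right h1 _
          _ ≤ toLex bM + toLex aM := add_le_add_left (hbMmax b hb) _
      rw [heq] at h2
      exact lt_irrefl _ h2
  have hmemm : bm + am ∈ (phi p hp hpdiag z (ev p hp hpdiag w)).support := by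
    refine Finsupp.mem_support_iff.2 (phi_coeff_ne p hp hpdiag z (ev p hp hpdiag w)
      am bm ham hbm ?_)
    intro a ha b hb heq
    by_cases haa : a = am
    · subst haa
      exact ⟨rfl, add_right_cancel heq⟩
    · exfalso
      have h1 : toLex am < toLex a :=
        lt_of_le_of_ne (hammin a ha) fun hh => haa (toLex_inj.1 hh).symm
      have h2 : toLex (bm + am) < toLex (b + a) := by
        rw [toLex_add, toLex_add]
        calc toLex bm + toLex am ≤ toLex b + toLex am := add_le_add_left (hbmmin b hb) _
          _ < toLex b + toLex a := add_lt_add_right h1 _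
      rw [heq] at h2
      exact lt_irrefl _ h2
  rw [hEQ] at hmemM hmemm
  obtain ⟨a1, ha1, b1, hb1, hde1⟩ := phi_support_subset p hp hpdiag (skewX p i)
    (ev p hp hpdiag z) (bM + aM) hmemM
  obtain ⟨a2, ha2, b2, hb2, hde2⟩ := phi_support_subset p hp hpdiag (skewX p i)
    (ev p hp hpdiag z) (bm + am) hmemm
  rw [hXsupp, Finset.mem_singleton] at ha1 ha2
  subst ha1
  subst ha2
  have hle1 : toLex bM ≤ toLex (Finsupp.single i (1:ℕ)) := by
    by_contra hcon
    push_neg at hcon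
    have h2 : toLex (b1 + Finsupp.single i (1:ℕ)) < toLex (bM + aM) := by
      rw [toLex_add, toLex_add]
      calc toLex b1 + toLex (Finsupp.single i (1:ℕ))
          ≤ toLex aM + toLex (Finsupp.single i (1:ℕ)) := add_le_add_left (haMmax b1 hb1) _
        _ < toLex aM + toLex bM := add_lt_add_right hcon _
        _ = toLex bM + toLex aM := add_comm _ _
    rw [← hde1] at h2
    exact lt_irrefl _ h2
  have hle2 : toLex (Finsupp.single i (1:ℕ)) ≤ toLex bm := by
    by_contra hcon
    push_neg at hcon
    have h2 : toLex (bm + am) < toLex (b2 + Finsupp.single i (1:ℕ)) := by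
      rw [toLex_add, toLex_add]
      calc toLex bm + toLex am < toLex (Finsupp.single i (1:ℕ)) + toLex am :=
            add_lt_add_left hcon _
        _ ≤ toLex (Finsupp.single i (1:ℕ)) + toLex b2 := add_le_add_right (hammin b2 hb2) _
        _ = toLex b2 + toLex (Finsupp.single i (1:ℕ)) := add_comm _ _
    rw [← hde2] at h2
    exact lt_irrefl _ h2
  have hsupp : (ev p hp hpdiag w).support ⊆ {Finsupp.single i (1:ℕ)} := by
    intro b hb
    have hA : toLex b ≤ toLex bM := hbMmax b hb
    have hB : toLex bm ≤ toLex b := hbmmin b hb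
    have hEq : toLex b = toLex (Finsupp.single i (1:ℕ)) :=
      le_antisymm (hA.trans hle1) (hle2.trans hB)
    exact Finset.mem_singleton.2 (toLex_inj.1 hEq)
  have hωeq : ev p hp hpdiag w
      = Finsupp.single (Finsupp.single i (1:ℕ)) (ev p hp hpdiag w (Finsupp.single i (1:ℕ))) :=
    Finsupp.support_subset_singleton.1 hsupp
  set lam := ev p hp hpdiag w (Finsupp.single i (1:ℕ)) with hlamdef
  have hlam : lam ≠ 0 := by
    intro h
    apply hω0
    rw [hωeq, h, Finsupp.single_zero]
  refine ⟨lam, hlam, ?_⟩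
  have hweq : ev p hp hpdiag (lam • skewX p i) = ev p hp hpdiag w := by
    rw [map_smul, ev_X, Finsupp.smul_single, smul_eq_mul, mul_one, hlamdef, ← hωeq]
  have hwq : w = lam • skewX p i := (hinj hweq).symm
  rw [← hw, hwq, mul_smul_comm]
end

section
/- Let A be a maximal order in its quotient ring Q with (I : I) = A for every fractional A-ideal I. Then a fractional A-ideal I satisfies (A : (A : I)) = I if and only if I is reflexive as a left A-module, i.e., the evaluation map I → Hom_{A^op}(Hom_A(I, A), A) is an isomorphism. -/
section Reflexive

variable {Q : Type*} [Ring Q]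

/-- A left `A`-module homomorphism from an `A`-`A` submodule `J` of `Q` to a subset
`I ⊆ Q`, where `A` is a subring of `Q`. -/
structure LHomSet (A : Subring Q) (J I : Set Q) where
  toFun : J → Q
  map_add : ∀ (x y : Q) (hx : x ∈ J) (hy : y ∈ J) (hxy : x + y ∈ J),
    toFun ⟨x + y, hxy⟩ = toFun ⟨x, hx⟩ + toFun ⟨y, hy⟩
  map_smul : ∀ (a x : Q) (_ : a ∈ A) (hx : x ∈ J) (hax : a * x ∈ J),
    toFun ⟨a * x, hax⟩ = a * toFun ⟨x, hx⟩
  mem_target : ∀ x : J, toFun x ∈ I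

/-- Pointwise addition on `Hom_A(I, A)`. -/
def LHomSet.addA {A : Subring Q} {I : Set Q} (f g : LHomSet A I (A : Set Q)) :
    LHomSet A I (A : Set Q) where
  toFun x := f.toFun x + g.toFun x
  map_add x y hx hy hxy := by
    rw [f.map_add x y hx hy hxy, g.map_add x y hx hy hxy]; abel
  map_smul a x ha hx hax := by
    rw [f.map_smul a x ha hx hax, g.map_smul a x ha hx hax, mul_add]
  mem_target x := A.add_mem (f.mem_target x) (g.mem_target x)

/-- The right `A`-action on `Hom_A(I, A)`, `(f · a)(x) = f(x) a`. -/
def LHomSet.rsmulA {A : Subring Q} {I : Set Q} (f : LHomSet A I (A : Set Q)) (a : A) :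
    LHomSet A I (A : Set Q) where
  toFun x := f.toFun x * a
  map_add x y hx hy hxy := by rw [f.map_add x y hx hy hxy, add_mul]
  map_smul b x hb hx hbx := by rw [f.map_smul b x hb hx hbx, mul_assoc]
  mem_target x := A.mul_mem (f.mem_target x) a.2

/-- An element of `Hom_{A^op}(Hom_A(I, A), A)`: an additive, right `A`-linear map
`Hom_A(I, A) → Q` with values in `A`. -/
structure DoubleDualElt (A : Subring Q) (I : Set Q) where
  toFun : LHomSet A I (A : Set Q) → Q
  map_add : ∀ f g : LHomSet A I (A : Set Q), toFun (f.addA g) = toFun f + toFun g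
  map_rsmul : ∀ (f : LHomSet A I (A : Set Q)) (a : A), toFun (f.rsmulA a) = toFun f * a
  mem : ∀ f : LHomSet A I (A : Set Q), toFun f ∈ A

/-- The canonical evaluation map `I → Hom_{A^op}(Hom_A(I, A), A)`. -/
def evalDD (A : Subring Q) (I : Set Q) (x : Q) (hx : x ∈ I) : DoubleDualElt A I where
  toFun f := f.toFun ⟨x, hx⟩
  map_add _ _ := rfl
  map_rsmul _ _ := rfl
  mem f := f.mem_target ⟨x, hx⟩

/-- The colon `(A : J) = {q ∈ Q ∣ qJ ⊆ A}`. -/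
def colonSet (A : Subring Q) (J : Set Q) : Set Q := {q : Q | ∀ x ∈ J, q * x ∈ A}

/-- An `A`-`A` submodule `I` of `Q` is a fractional `A`-ideal if it contains a unit of
`Q` and `uI ⊆ A`, `Iv ⊆ A` for some units `u, v` of `Q`. -/
def IsFracIdeal (A : Subring Q) (I : Set Q) : Prop :=
  (∀ x ∈ I, ∀ y ∈ I, x + y ∈ I) ∧ (∀ x ∈ I, -x ∈ I) ∧
  (∀ a ∈ A, ∀ x ∈ I, a * x ∈ I) ∧ (∀ a ∈ A, ∀ x ∈ I, x * a ∈ I) ∧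
  (∃ u : Qˣ, (u : Q) ∈ I) ∧
  (∃ u : Qˣ, ∀ x ∈ I, (u : Q) * x ∈ A) ∧ (∃ v : Qˣ, ∀ x ∈ I, x * (v : Q) ∈ A)

theorem LHomSet.ext' {A : Subring Q} {J I : Set Q} {f g : LHomSet A J I}
    (h : f.toFun = g.toFun) : f = g := by
  cases f; cases g; cases h; rfl

theorem DoubleDualElt.ext' {A : Subring Q} {I : Set Q} {f g : DoubleDualElt A I}
    (h : f.toFun = g.toFun) : f = g := by
  cases f; cases g; cases h; rfl

/-- Right multiplication by `q` with `Iq ⊆ A` as a left `A`-hom `I → A`. -/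
def rmulHom (A : Subring Q) (I : Set Q) (q : Q) (hq : ∀ x ∈ I, x * q ∈ A) :
    LHomSet A I (A : Set Q) where
  toFun x := x.1 * q
  map_add x y _ _ _ := add_mul x y q
  map_smul a x _ _ _ := mul_assoc a x q
  mem_target x := hq x.1 x.2

/-- Every left `A`-hom `I → A` is right multiplication by `u₀⁻¹ f(u₀)`. -/
theorem hom_eq_rmul (A : Subring Q)
    (hlfrac : ∀ q : Q, ∃ (a : Qˣ) (b : Q), (a : Q) ∈ A ∧ b ∈ A ∧ q = (↑a⁻¹ : Q) * b)
    (I : Set Q) (hsmul_l : ∀ a ∈ A, ∀ x ∈ I, a * x ∈ I)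
    (u₀ : Qˣ) (hu₀ : (u₀ : Q) ∈ I) (f : LHomSet A I (A : Set Q)) :
    ∀ (x : Q) (hx : x ∈ I),
      f.toFun ⟨x, hx⟩ = x * ((↑u₀⁻¹ : Q) * f.toFun ⟨u₀, hu₀⟩) := by
  intro x hx
  set c := f.toFun ⟨u₀, hu₀⟩ with hc
  obtain ⟨a, b, ha, hb, hab⟩ := hlfrac (x * (↑u₀⁻¹ : Q))
  have h1 : (a : Q) * x = b * u₀ := by
    have : (a : Q) * (x * (↑u₀⁻¹ : Q)) = b := by
      rw [hab]; exact Units.mul_inv_cancel_left a b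
    have h2 := congrArg (· * (u₀ : Q)) this
    simpa [mul_assoc] using h2
  have hax : (a : Q) * x ∈ I := hsmul_l a ha x hx
  have hbu : b * (u₀ : Q) ∈ I := h1 ▸ hax
  have e1 : f.toFun ⟨(a : Q) * x, hax⟩ = (a : Q) * f.toFun ⟨x, hx⟩ :=
    f.map_smul a x ha hx hax
  have e2 : f.toFun ⟨b * (u₀ : Q), hbu⟩ = b * c :=
    f.map_smul b (u₀ : Q) hb hu₀ hbu
  have e3 : (⟨(a : Q) * x, hax⟩ : I) = ⟨b * (u₀ : Q), hbu⟩ := Subtype.ext h1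
  have e4 : (a : Q) * f.toFun ⟨x, hx⟩ = b * c := by rw [← e1, e3, e2]
  have : f.toFun ⟨x, hx⟩ = (↑a⁻¹ : Q) * (b * c) := by
    rw [← e4, Units.inv_mul_cancel_left]
  rw [this, ← mul_assoc, ← hab, mul_assoc]

/-- Let `A` be a maximal order in its quotient ring `Q`, so that `(I : I) = A` for
every fractional `A`-ideal `I` and left and right colons into `A` coincide.  Then a
fractional `A`-ideal `I` satisfies `(A : (A : I)) = I` if and only if `I` is
reflexive as a left `A`-module, i.e. the evaluation map
`I → Hom_{A^op}(Hom_A(I, A), A)` is bijective. -/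
theorem colon_colon_eq_iff_reflexive (A : Subring Q)
    (hprime : ∀ x y : Q, x ∈ A → y ∈ A → (∀ r ∈ A, x * r * y = 0) → x = 0 ∨ y = 0)
    (hreg_unit : ∀ a : Q, a ∈ A → (∀ b : Q, (a * b = 0 → b = 0) ∧ (b * a = 0 → b = 0)) →
      ∃ u : Qˣ, (u : Q) = a)
    (hlfrac : ∀ q : Q, ∃ (a : Qˣ) (b : Q), (a : Q) ∈ A ∧ b ∈ A ∧ q = (↑a⁻¹ : Q) * b)
    (hrfrac : ∀ q : Q, ∃ (a : Qˣ) (b : Q), (a : Q) ∈ A ∧ b ∈ A ∧ q = b * (↑a⁻¹ : Q))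
    (hmaxl : ∀ J : Set Q, IsFracIdeal A J → {q : Q | ∀ x ∈ J, q * x ∈ J} = (A : Set Q))
    (hmaxr : ∀ J : Set Q, IsFracIdeal A J → {q : Q | ∀ x ∈ J, x * q ∈ J} = (A : Set Q))
    (hcolon_eq : ∀ J : Set Q, IsFracIdeal A J →
      colonSet A J = {q : Q | ∀ x ∈ J, x * q ∈ A})
    (I : Set Q) (hI : IsFracIdeal A I) :
    colonSet A (colonSet A I) = I ↔
      Function.Bijective (fun x : I => evalDD A I x.1 x.2) := by
  clear hprime hreg_unit hmaxl hmaxr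
  obtain ⟨hadd, hneg, hsmul_l, hsmul_r, ⟨u₀, hu₀⟩, ⟨u, hu⟩, ⟨v, hv⟩⟩ := hI
  have hI' : IsFracIdeal A I :=
    ⟨hadd, hneg, hsmul_l, hsmul_r, ⟨u₀, hu₀⟩, ⟨u, hu⟩, ⟨v, hv⟩⟩
  -- right characterization of J = colonSet A I
  have hJr : ∀ q : Q, q ∈ colonSet A I ↔ ∀ x ∈ I, x * q ∈ A := by
    intro q
    have := hcolon_eq I hI'
    constructor
    · intro hq; exact (this ▸ hq : q ∈ {q : Q | ∀ x ∈ I, x * q ∈ A})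
    · intro hq; rw [this]; exact hq
  -- J is a fractional ideal
  have hJfrac : IsFracIdeal A (colonSet A I) := by
    refine ⟨?_, ?_, ?_, ?_, ⟨u, fun x hx => hu x hx⟩, ⟨u₀, ?_⟩, ⟨u₀, ?_⟩⟩
    · intro q hq q' hq' x hx; rw [add_mul]; exact A.add_mem (hq x hx) (hq' x hx)
    · intro q hq x hx; rw [neg_mul]; exact A.neg_mem (hq x hx)
    · intro a ha q hq x hx; rw [mul_assoc]; exact A.mul_mem ha (hq x hx)
    · intro a ha q hq
      rw [hJr]
      intro x hx
      rw [← mul_assoc]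
      exact A.mul_mem ((hJr q).1 hq x hx) ha
    · intro q hq; exact (hJr q).1 hq (u₀ : Q) hu₀
    · intro q hq; exact hq (u₀ : Q) hu₀
  -- each f : Hom_A(I,A) is right mult by q_f ∈ J
  have key := hom_eq_rmul A hlfrac I hsmul_l u₀ hu₀
  have hqf_mem : ∀ f : LHomSet A I (A : Set Q),
      ((↑u₀⁻¹ : Q) * f.toFun ⟨u₀, hu₀⟩) ∈ colonSet A I := by
    intro f
    rw [hJr]
    intro x hx
    rw [← key f x hx]
    exact f.mem_target ⟨x, hx⟩
  -- f is determined: f = rmulHom q_f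
  have hfeq : ∀ f : LHomSet A I (A : Set Q),
      f = rmulHom A I ((↑u₀⁻¹ : Q) * f.toFun ⟨u₀, hu₀⟩)
        (fun x hx => (hJr _).1 (hqf_mem f) x hx) := by
    intro f
    apply LHomSet.ext'
    funext x
    exact key f x.1 x.2
  constructor
  · -- colon² = I → bijective
    intro hCC
    constructor
    · -- injective (always true)
      rintro ⟨x, hx⟩ ⟨y, hy⟩ h
      have h2 := congrArg (fun φ : DoubleDualElt A I =>
        φ.toFun (rmulHom A I (v : Q) hv)) h
      simp only [evalDD, rmulHom] at h2
      have : x = y := by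
        have := congrArg (· * (↑v⁻¹ : Q)) h2
        simpa [mul_assoc] using this
      exact Subtype.ext this
    · -- surjective
      intro φ
      -- ψ q := φ (rmulHom q)
      set ψ : ∀ q : Q, (∀ x ∈ I, x * q ∈ A) → Q :=
        fun q hq => φ.toFun (rmulHom A I q hq) with hψ
      have ψsmul : ∀ (q : Q) (hq : ∀ x ∈ I, x * q ∈ A) (a : Q) (ha : a ∈ A)
          (hqa : ∀ x ∈ I, x * (q * a) ∈ A), ψ (q * a) hqa = ψ q hq * a := by
        intro q hq a ha hqa
        have : rmulHom A I (q * a) hqa = (rmulHom A I q hq).rsmulA ⟨a, ha⟩ := by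
          apply LHomSet.ext'
          funext x
          exact (mul_assoc x.1 q a).symm
        rw [hψ]; dsimp only; rw [this]
        exact φ.map_rsmul (rmulHom A I q hq) ⟨a, ha⟩
      -- u is a unit in J
      have huJ : (u : Q) ∈ colonSet A I := fun x hx => hu x hx
      have huJr : ∀ x ∈ I, x * (u : Q) ∈ A := (hJr _).1 huJ
      set x₀ : Q := ψ (u : Q) huJr * (↑u⁻¹ : Q) with hx₀
      have hψeq : ∀ (q : Q) (hq : q ∈ colonSet A I),
          ψ q ((hJr q).1 hq) = x₀ * q := by
        intro q hq
        obtain ⟨a, b, ha, hb, hab⟩ := hrfrac ((↑u⁻¹ : Q) * q)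
        have h1 : q * (a : Q) = (u : Q) * b := by
          have e : ((↑u⁻¹ : Q) * q) * (a : Q) = b := by
            rw [hab]; exact Units.inv_mul_cancel_right b a
          have h2 := congrArg ((u : Q) * ·) e
          simpa [mul_assoc] using h2
        have hqa : (q * (a : Q)) ∈ colonSet A I := by
          rw [hJr]
          intro x hx
          rw [← mul_assoc]
          exact A.mul_mem ((hJr q).1 hq x hx) ha
        have hub : ((u : Q) * b) ∈ colonSet A I := h1 ▸ hqa
        have e1 : ψ (q * (a : Q)) ((hJr _).1 hqa) = ψ q ((hJr q).1 hq) * (a : Q) :=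
          ψsmul q ((hJr q).1 hq) (a : Q) ha ((hJr _).1 hqa)
        have e2 : ψ ((u : Q) * b) ((hJr _).1 hub) = ψ (u : Q) huJr * b :=
          ψsmul (u : Q) huJr b hb ((hJr _).1 hub)
        have e3 : ψ (q * (a : Q)) ((hJr _).1 hqa) = ψ ((u : Q) * b) ((hJr _).1 hub) := by
          congr 1
        have e4 : ψ q ((hJr q).1 hq) * (a : Q) = ψ (u : Q) huJr * b := by
          rw [← e1, e3, e2]
        have : ψ q ((hJr q).1 hq) = ψ (u : Q) huJr * b * (↑a⁻¹ : Q) := by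
          rw [← e4]; exact (Units.mul_inv_cancel_right _ a).symm
        rw [this, hx₀]; simp only [mul_assoc]; rw [← hab]
      have hx₀mem : x₀ ∈ colonSet A (colonSet A I) := by
        intro q hq
        rw [← hψeq q hq]
        exact φ.mem _
      rw [hCC] at hx₀mem
      refine ⟨⟨x₀, hx₀mem⟩, ?_⟩
      apply DoubleDualElt.ext'
      funext f
      show f.toFun ⟨x₀, hx₀mem⟩ = φ.toFun f
      rw [key f x₀ hx₀mem]
      rw [← hψeq _ (hqf_mem f)]
      rw [hψ]
      dsimp only
      congr 1
      exact (hfeq f).symm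
  · -- bijective → colon² = I
    intro hbij
    apply Set.Subset.antisymm
    · intro x hx
      -- build the double-dual element φ(f) = x * q_f
      set φ : DoubleDualElt A I :=
        { toFun := fun f => x * ((↑u₀⁻¹ : Q) * f.toFun ⟨u₀, hu₀⟩)
          map_add := by
            intro f g
            show x * ((↑u₀⁻¹ : Q) * (f.toFun ⟨u₀, hu₀⟩ + g.toFun ⟨u₀, hu₀⟩)) = _
            rw [mul_add, mul_add]
          map_rsmul := by
            intro f a
            show x * ((↑u₀⁻¹ : Q) * (f.toFun ⟨u₀, hu₀⟩ * (a : Q))) =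
              x * ((↑u₀⁻¹ : Q) * f.toFun ⟨u₀, hu₀⟩) * (a : Q)
            simp only [mul_assoc]
          mem := fun f => hx _ (hqf_mem f) } with hφ
      obtain ⟨⟨y, hy⟩, hyφ⟩ := hbij.2 φ
      -- evaluate at f = rmulHom v
      have hvJ : (v : Q) ∈ colonSet A I := by rw [hJr]; exact hv
      have h2 := congrArg (fun ξ : DoubleDualElt A I =>
        ξ.toFun (rmulHom A I (v : Q) hv)) hyφ
      simp only [evalDD, hφ, rmulHom] at h2
      -- h2 : y * v = x * (u₀⁻¹ * (u₀ * v))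
      have h3 : y * (v : Q) = x * (v : Q) := by
        rw [h2]; rw [Units.inv_mul_cancel_left]
      have : y = x := by
        have := congrArg (· * (↑v⁻¹ : Q)) h3
        simpa [mul_assoc] using this
      exact this ▸ hy
    · intro x hx q hq
      exact (hJr q).1 hq x hx

end Reflexive
end

section
/- Let A be an ℕ-graded connected k-algebra that is a graded domain, and let z ∈ A be a nonzero normal element written as z = z_1 + ⋯ + z_n with homogeneous components z_i of strictly increasing degrees. Then for every homogeneous a ∈ A, the element η_z(a) (defined by za = η_z(a)z) is homogeneous of the same degree as a, and z_i a = η_z(a) z_i for every i. In particular, the lowest homogeneous component z_1 is a normal element with η_{z_1} = η_z. -/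
open DirectSum

lemma graded_normal_key {k A : Type*} [Field k] [Ring A]
    [IsDomain A] [Algebra k A] (𝒜 : ℕ → Submodule k A) [GradedAlgebra 𝒜]
    (z : A) (hz0 : z ≠ 0)
    (m : ℕ) (hm : 0 < m) (d : Fin m → ℕ) (hd : StrictMono d)
    (zc : Fin m → A) (hzc : ∀ j, zc j ∈ 𝒜 (d j)) (hzc0 : ∀ j, zc j ≠ 0)
    (hdecomp : z = ∑ j : Fin m, zc j) :
    ∀ (e : ℕ) (a : A), a ∈ 𝒜 e → ∀ w : A, z * a = w * z →
        w ∈ 𝒜 e ∧ ∀ j : Fin m, zc j * a = w * zc j := by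
  classical
  intro e a ha w hw
  by_cases ha0 : a = 0
  · have hwz : w * z = 0 := by rw [← hw, ha0, mul_zero]
    have hw0 : w = 0 := (mul_eq_zero.mp hwz).resolve_right hz0
    subst ha0; subst hw0
    exact ⟨(𝒜 e).zero_mem, fun j => by rw [mul_zero, zero_mul]⟩
  have hL : ∀ n : ℕ, (DirectSum.decompose 𝒜 (z * a) n : A)
      = ∑ j : Fin m, if d j + e = n then zc j * a else 0 := by
    intro n
    rw [hdecomp, Finset.sum_mul, DirectSum.decompose_sum, DFinsupp.finset_sum_apply,
      AddSubmonoidClass.coe_finset_sum]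
    refine Finset.sum_congr rfl fun j _ => ?_
    split_ifs with h
    · exact h ▸ DirectSum.decompose_of_mem_same 𝒜 (SetLike.mul_mem_graded (hzc j) ha)
    · exact DirectSum.decompose_of_mem_ne 𝒜 (SetLike.mul_mem_graded (hzc j) ha) h
  have hR : ∀ n : ℕ, (DirectSum.decompose 𝒜 (w * z) n : A)
      = ∑ j : Fin m, if d j ≤ n then (DirectSum.decompose 𝒜 w (n - d j) : A) * zc j else 0 := by
    intro n
    rw [hdecomp, Finset.mul_sum, DirectSum.decompose_sum, DFinsupp.finset_sum_apply,
      AddSubmonoidClass.coe_finset_sum]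
    refine Finset.sum_congr rfl fun j _ => ?_
    rw [DirectSum.decompose_mul, DirectSum.decompose_of_mem 𝒜 (hzc j),
      DirectSum.coe_mul_of_apply]
  have hwne : w ≠ 0 := by
    intro h
    exact mul_ne_zero hz0 ha0 (by rw [hw, h, zero_mul])
  have hsupp : (DirectSum.decompose 𝒜 w).support.Nonempty := by
    rw [Finset.nonempty_iff_ne_empty, Ne, DFinsupp.support_eq_empty]
    intro h
    apply hwne
    have := congrArg (DirectSum.decompose 𝒜).symm h
    simpa using this
  set l := (DirectSum.decompose 𝒜 w).support.min' hsupp with hl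
  set t := (DirectSum.decompose 𝒜 w).support.max' hsupp with ht
  have hlmem := Finset.min'_mem _ hsupp
  have htmem := Finset.max'_mem _ hsupp
  have hcoe_ne : ∀ {n : ℕ}, n ∈ (DirectSum.decompose 𝒜 w).support →
      (DirectSum.decompose 𝒜 w n : A) ≠ 0 :=
    fun hn h => DFinsupp.mem_support_iff.mp hn (ZeroMemClass.coe_eq_zero.mp h)
  have hcoe_zero : ∀ {n : ℕ}, n ∉ (DirectSum.decompose 𝒜 w).support →
      (DirectSum.decompose 𝒜 w n : A) = 0 := by
    intro n hn
    rw [DFinsupp.notMem_support_iff.mp hn, ZeroMemClass.coe_zero]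
  -- lower bound: e ≤ l
  have hel : e ≤ l := by
    have h1 : (DirectSum.decompose 𝒜 (w * z) (l + d ⟨0, hm⟩) : A)
        = (DirectSum.decompose 𝒜 w l : A) * zc ⟨0, hm⟩ := by
      rw [hR, Fintype.sum_eq_single (⟨0, hm⟩ : Fin m)]
      · rw [if_pos (Nat.le_add_left _ _), Nat.add_sub_cancel]
      · intro j hj
        have hj0 : 0 < j.1 := Nat.pos_of_ne_zero (fun h => hj (Fin.ext h))
        have hdj : d ⟨0, hm⟩ < d j := hd (Fin.lt_def.mpr hj0)
        by_cases hle : d j ≤ l + d ⟨0, hm⟩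
        · rw [if_pos hle]
          have hnot : (l + d ⟨0, hm⟩ - d j) ∉ (DirectSum.decompose 𝒜 w).support := by
            intro hmem
            have := Finset.min'_le _ _ hmem
            omega
          rw [hcoe_zero hnot, zero_mul]
        · rw [if_neg hle]
    have h2 : (DirectSum.decompose 𝒜 w l : A) * zc ⟨0, hm⟩ ≠ 0 :=
      mul_ne_zero (hcoe_ne hlmem) (hzc0 _)
    have h3 : ∃ j : Fin m, d j + e = l + d ⟨0, hm⟩ := by
      by_contra hc
      push_neg at hc
      apply h2
      rw [← h1, ← hw, hL, Finset.sum_eq_zero (fun j _ => if_neg (hc j))]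
    obtain ⟨j, hj⟩ := h3
    have : d ⟨0, hm⟩ ≤ d j := hd.monotone (by simp [Fin.le_def])
    omega
  -- upper bound: t ≤ e
  have hte : t ≤ e := by
    set jt : Fin m := ⟨m - 1, by omega⟩ with hjt
    have h1 : (DirectSum.decompose 𝒜 (w * z) (t + d jt) : A)
        = (DirectSum.decompose 𝒜 w t : A) * zc jt := by
      rw [hR, Fintype.sum_eq_single jt]
      · rw [if_pos (Nat.le_add_left _ _), Nat.add_sub_cancel]
      · intro j hj
        have hjv : j.1 < m - 1 := by
          have h2 := j.2
          have : j.1 ≠ m - 1 := fun h => hj (Fin.ext h)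
          omega
        have hdj : d j < d jt := hd (Fin.lt_def.mpr (show j.1 < m - 1 from hjv))
        by_cases hle : d j ≤ t + d jt
        · rw [if_pos hle]
          have hnot : (t + d jt - d j) ∉ (DirectSum.decompose 𝒜 w).support := by
            intro hmem
            have := Finset.le_max' _ _ hmem
            omega
          rw [hcoe_zero hnot, zero_mul]
        · rw [if_neg hle]
    have h2 : (DirectSum.decompose 𝒜 w t : A) * zc jt ≠ 0 :=
      mul_ne_zero (hcoe_ne htmem) (hzc0 _)
    have h3 : ∃ j : Fin m, d j + e = t + d jt := by
      by_contra hc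
      push_neg at hc
      apply h2
      rw [← h1, ← hw, hL, Finset.sum_eq_zero (fun j _ => if_neg (hc j))]
    obtain ⟨j, hj⟩ := h3
    have : d j ≤ d jt := hd.monotone (Fin.le_def.mpr (show j.1 ≤ m - 1 by
      have := j.2; omega))
    omega
  have hwmem : w ∈ 𝒜 e := by
    rw [← DirectSum.sum_support_decompose 𝒜 w]
    refine Submodule.sum_mem _ fun i hi => ?_
    have hie : i = e :=
      le_antisymm (le_trans (Finset.le_max' _ _ hi) hte)
        (le_trans hel (Finset.min'_le _ _ hi))
    exact hie ▸ SetLike.coe_mem _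
  refine ⟨hwmem, fun j => ?_⟩
  have h1 : (DirectSum.decompose 𝒜 (z * a) (d j + e) : A) = zc j * a := by
    rw [hL, Fintype.sum_eq_single j
      (fun j' hj' => if_neg (fun h => hj' (hd.injective (by omega)))), if_pos rfl]
  have h2 : (DirectSum.decompose 𝒜 (w * z) (d j + e) : A) = w * zc j := by
    have hws : w * z = ∑ j' : Fin m, w * zc j' := by rw [hdecomp, Finset.mul_sum]
    rw [hws, DirectSum.decompose_sum, DFinsupp.finset_sum_apply,
      AddSubmonoidClass.coe_finset_sum, Fintype.sum_eq_single j]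
    · have hmem : w * zc j ∈ 𝒜 (e + d j) := SetLike.mul_mem_graded hwmem (hzc j)
      rw [add_comm e (d j)] at hmem
      exact DirectSum.decompose_of_mem_same 𝒜 hmem
    · intro j' hj'
      refine DirectSum.decompose_of_mem_ne 𝒜 (SetLike.mul_mem_graded hwmem (hzc j')) ?_
      intro h
      exact hj' (hd.injective (by omega))
  rw [← h1, hw, h2]

/-- Let `A` be a connected `ℕ`-graded `k`-algebra which is a domain, and let
`z = z_1 + ⋯ + z_m` be a nonzero normal element written as a sum of nonzero
homogeneous components `z_j ∈ A_{d j}` of strictly increasing degrees.  Then for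
every homogeneous `a ∈ A_e` and any `w` with `z * a = w * z` (i.e. `w = η_z(a)`),
`w` is homogeneous of the same degree `e` and `z_j * a = w * z_j` for every `j`;
in particular the lowest component `z_1` is normal with `η_{z_1} = η_z`. -/
theorem lowest_component_of_normal_is_normal {k A : Type*} [Field k] [Ring A]
    [IsDomain A] [Algebra k A] (𝒜 : ℕ → Submodule k A) [GradedAlgebra 𝒜]
    (hconn : ∀ x ∈ 𝒜 0, ∃ c : k, x = algebraMap k A c)
    (z : A) (hz0 : z ≠ 0)
    (hznormal : Set.range (fun r => r * z) = Set.range (fun r => z * r))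
    (m : ℕ) (hm : 0 < m) (d : Fin m → ℕ) (hd : StrictMono d)
    (zc : Fin m → A) (hzc : ∀ j, zc j ∈ 𝒜 (d j)) (hzc0 : ∀ j, zc j ≠ 0)
    (hdecomp : z = ∑ j : Fin m, zc j) :
    (∀ (e : ℕ) (a : A), a ∈ 𝒜 e → ∀ w : A, z * a = w * z →
        w ∈ 𝒜 e ∧ ∀ j : Fin m, zc j * a = w * zc j) ∧
    Set.range (fun r => r * zc ⟨0, hm⟩) = Set.range (fun r => zc ⟨0, hm⟩ * r) := by
  classical
  have key := graded_normal_key 𝒜 z hz0 m hm d hd zc hzc hzc0 hdecomp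
  refine ⟨key, ?_⟩
  have hC : ∀ s : A, ∃ r : A, z * s = r * z ∧ zc ⟨0, hm⟩ * s = r * zc ⟨0, hm⟩ := by
    intro s
    have hch : ∀ n : ℕ, ∃ wn : A, z * (DirectSum.decompose 𝒜 s n : A) = wn * z := by
      intro n
      have hmem : z * (DirectSum.decompose 𝒜 s n : A) ∈ Set.range (fun r => z * r) :=
        ⟨_, rfl⟩
      rw [← hznormal] at hmem
      obtain ⟨wn, hwn⟩ := hmem
      exact ⟨wn, hwn.symm⟩
    choose wfun hwfun using hch
    refine ⟨∑ n ∈ (DirectSum.decompose 𝒜 s).support, wfun n, ?_, ?_⟩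
    · conv_lhs => rw [← DirectSum.sum_support_decompose 𝒜 s]
      rw [Finset.mul_sum, Finset.sum_mul]
      exact Finset.sum_congr rfl fun n _ => hwfun n
    · conv_lhs => rw [← DirectSum.sum_support_decompose 𝒜 s]
      rw [Finset.mul_sum, Finset.sum_mul]
      refine Finset.sum_congr rfl fun n _ => ?_
      exact (key n _ (SetLike.coe_mem _) (wfun n) (hwfun n)).2 ⟨0, hm⟩
  apply Set.Subset.antisymm
  · rintro _ ⟨r, rfl⟩
    have h1 : r * z ∈ Set.range fun x => z * x := by
      rw [← hznormal]; exact ⟨r, rfl⟩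
    obtain ⟨s, hs⟩ := h1
    obtain ⟨r', hr1, hr2⟩ := hC s
    have hrr : r' = r := mul_right_cancel₀ hz0 (by rw [← hr1]; exact hs)
    exact ⟨s, show zc ⟨0, hm⟩ * s = r * zc ⟨0, hm⟩ by rw [← hrr]; exact hr2⟩
  · rintro _ ⟨s, rfl⟩
    obtain ⟨r', _, hr2⟩ := hC s
    exact ⟨r', show r' * zc ⟨0, hm⟩ = zc ⟨0, hm⟩ * s from hr2.symm⟩
end
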